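/- arXiv:1005.2012 — 4 statements merged into one kernel-verified Lean document; each statement's English description precedes it below -/
import Mathlib

section
/- Let {g(t)}_{t=1}^T ⊂ ℝ^d be an arbitrary sequence of vectors, {α(t)}_{t=0}^T a non-increasing sequence of positive stepsizes, and define z(t) = Σ_{s=1}^{t−1} g(s) and x(t) = argmin_{x ∈ X} { ⟨z(t), x⟩ + (1/α(t−1)) ψ(x) }. Then for any x* ∈ X: Σ_{t=1}^T ⟨g(t), x(t) − x*⟩ ≤ (1/2) Σ_{t=1}^T α(t−1) ‖g(t)‖_*² + (1/α(T)) ψ(x*). -/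
section helpers
variable {d : ℕ} (nrm : (Fin d → ℝ) → ℝ)

lemma da_nrm_zero (hnrm_eq_zero : ∀ v, nrm v = 0 ↔ v = 0) : nrm 0 = 0 :=
  (hnrm_eq_zero 0).mpr rfl

lemma da_nrm_sum_le (hzero : nrm 0 = 0)
    (hnrm_add : ∀ u v, nrm (u + v) ≤ nrm u + nrm v)
    {ι : Type*} (s : Finset ι) (f : ι → (Fin d → ℝ)) :
    nrm (∑ i ∈ s, f i) ≤ ∑ i ∈ s, nrm (f i) := by
  classical
  induction s using Finset.induction with
  | empty => simp [hzero]
  | insert a s hni ih =>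
    rw [Finset.sum_insert hni, Finset.sum_insert hni]
    exact le_trans (hnrm_add _ _) (by linarith)

lemma da_nrm_le (hnrm_nonneg : ∀ v, 0 ≤ nrm v) (hzero : nrm 0 = 0)
    (hnrm_add : ∀ u v, nrm (u + v) ≤ nrm u + nrm v)
    (hnrm_smul : ∀ (c : ℝ) v, nrm (c • v) = |c| * nrm v)
    (w : Fin d → ℝ) :
    nrm w ≤ (∑ i, nrm (Pi.single i 1)) * ‖w‖ := by
  set e : Fin d → (Fin d → ℝ) := fun i => Pi.single i 1 with he
  have hw : w = ∑ i, w i • e i := by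
    funext j
    simp [he, Finset.sum_apply, Pi.single_apply]
  calc nrm w = nrm (∑ i, w i • e i) := by rw [← hw]
    _ ≤ ∑ i, nrm (w i • e i) := da_nrm_sum_le nrm hzero hnrm_add _ _
    _ = ∑ i, |w i| * nrm (e i) := by simp [hnrm_smul]
    _ ≤ ∑ i, ‖w‖ * nrm (e i) := by
        apply Finset.sum_le_sum
        intro i _
        have h1 : |w i| ≤ ‖w‖ := by
          simpa [Real.norm_eq_abs] using norm_le_pi_norm w i
        exact mul_le_mul_of_nonneg_right h1 (hnrm_nonneg _)
    _ = (∑ i, nrm (e i)) * ‖w‖ := by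
        rw [Finset.sum_mul]
        exact Finset.sum_congr rfl fun i _ => mul_comm _ _

lemma da_nrm_lower
    (hnrm_nonneg : ∀ v, 0 ≤ nrm v)
    (hnrm_eq_zero : ∀ v, nrm v = 0 ↔ v = 0)
    (hnrm_add : ∀ u v, nrm (u + v) ≤ nrm u + nrm v)
    (hnrm_smul : ∀ (c : ℝ) v, nrm (c • v) = |c| * nrm v) :
    ∃ c : ℝ, 0 < c ∧ ∀ u, c * ‖u‖ ≤ nrm u := by
  have hzero : nrm 0 = 0 := da_nrm_zero nrm hnrm_eq_zero
  rcases Nat.eq_zero_or_pos d with hd | hd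
  · refine ⟨1, one_pos, fun u => ?_⟩
    have : u = 0 := funext fun i => absurd i.2 (by omega)
    simp [this, hzero]
  · -- continuity of nrm
    set L : ℝ := ∑ i, nrm (Pi.single i 1) with hL
    have hlip : ∀ a b : Fin d → ℝ, nrm a - nrm b ≤ L * ‖a - b‖ := by
      intro a b
      have h1 : nrm a ≤ nrm (a - b) + nrm b := by
        have := hnrm_add (a - b) b
        simpa [sub_add_cancel] using this
      have h2 := da_nrm_le nrm hnrm_nonneg hzero hnrm_add hnrm_smul (a - b)
      linarith
    have hcont : Continuous nrm := by
      have hLnn : 0 ≤ L := by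
        apply Finset.sum_nonneg
        intro i _
        exact hnrm_nonneg _
      apply (LipschitzWith.of_dist_le_mul (K := Real.toNNReal L) (f := nrm) ?_).continuous
      intro a b
      rw [Real.dist_eq, Real.coe_toNNReal L hLnn, dist_eq_norm]
      rw [abs_sub_le_iff]
      constructor
      · exact hlip a b
      · have := hlip b a
        have he : ‖b - a‖ = ‖a - b‖ := by rw [norm_sub_rev]
        linarith [hlip b a, he ▸ hlip b a]
    have hcompact : IsCompact (Metric.sphere (0 : Fin d → ℝ) 1) := isCompact_sphere 0 1
    have hne : (Metric.sphere (0 : Fin d → ℝ) 1).Nonempty := by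
      refine ⟨fun _ => 1, ?_⟩
      have : Nonempty (Fin d) := ⟨⟨0, hd⟩⟩
      have h1 : ‖(fun _ => (1:ℝ) : Fin d → ℝ)‖ = 1 := by simpa using (pi_norm_const (1:ℝ))
      simp [Metric.mem_sphere, dist_eq_norm, h1]
    obtain ⟨u₀, hu₀mem, hu₀min⟩ := hcompact.exists_isMinOn hne hcont.continuousOn
    have hu₀norm : ‖u₀‖ = 1 := by simpa [dist_eq_norm] using hu₀mem
    have hu₀ne : u₀ ≠ 0 := by
      intro h
      rw [h] at hu₀norm; simp at hu₀norm
    have hc : 0 < nrm u₀ := by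
      rcases lt_or_eq_of_le (hnrm_nonneg u₀) with h | h
      · exact h
      · exact absurd ((hnrm_eq_zero u₀).mp h.symm) hu₀ne
    refine ⟨nrm u₀, hc, fun u => ?_⟩
    by_cases hu : u = 0
    · simp [hu, hzero]
    · have hnu : (0:ℝ) < ‖u‖ := norm_pos_iff.mpr hu
      have hmem : ‖u‖⁻¹ • u ∈ Metric.sphere (0 : Fin d → ℝ) 1 := by
        simp [dist_eq_norm, norm_smul, abs_of_pos (inv_pos.mpr hnu), inv_mul_cancel₀ hnu.ne']
      have h3 : nrm u₀ ≤ nrm (‖u‖⁻¹ • u) := hu₀min hmem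
      have hval : nrm (‖u‖⁻¹ • u) = ‖u‖⁻¹ * nrm u := by
        rw [hnrm_smul, abs_of_pos (inv_pos.mpr hnu)]
      rw [hval] at h3
      calc nrm u₀ * ‖u‖ ≤ (‖u‖⁻¹ * nrm u) * ‖u‖ :=
            mul_le_mul_of_nonneg_right h3 hnu.le
        _ = nrm u := by field_simp

end helpers


lemma da_pairing {d : ℕ} (nrm : (Fin d → ℝ) → ℝ) (dnrm : (Fin d → ℝ) → ℝ)
    (hnrm_nonneg : ∀ v, 0 ≤ nrm v)
    (hnrm_eq_zero : ∀ v, nrm v = 0 ↔ v = 0)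
    (hnrm_add : ∀ u v, nrm (u + v) ≤ nrm u + nrm v)
    (hnrm_smul : ∀ (c : ℝ) v, nrm (c • v) = |c| * nrm v)
    (hdnrm : ∀ v, dnrm v = sSup {r | ∃ u : Fin d → ℝ, nrm u = 1 ∧ r = ∑ i, v i * u i})
    (v w : Fin d → ℝ) :
    (∑ i, v i * w i) ≤ dnrm v * nrm w := by
  have hzero : nrm 0 = 0 := da_nrm_zero nrm hnrm_eq_zero
  by_cases hw : w = 0
  · simp [hw, hzero]
  · obtain ⟨c, hc, hcle⟩ := da_nrm_lower nrm hnrm_nonneg hnrm_eq_zero hnrm_add hnrm_smul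
    have hn : 0 < nrm w := by
      rcases lt_or_eq_of_le (hnrm_nonneg w) with h | h
      · exact h
      · exact absurd ((hnrm_eq_zero w).mp h.symm) hw
    set S : Set ℝ := {r | ∃ u : Fin d → ℝ, nrm u = 1 ∧ r = ∑ i, v i * u i} with hS
    have hbdd : BddAbove S := by
      refine ⟨(∑ i, |v i|) / c, fun r hr => ?_⟩
      obtain ⟨u, hu1, rfl⟩ := hr
      have hub : ‖u‖ ≤ 1 / c := by
        have := hcle u
        rw [hu1] at this
        rw [le_div_iff₀ hc]
        linarith
      calc ∑ i, v i * u i ≤ ∑ i, |v i| * (1 / c) := by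
            apply Finset.sum_le_sum
            intro i _
            have h1 : |u i| ≤ ‖u‖ := by simpa [Real.norm_eq_abs] using norm_le_pi_norm u i
            calc v i * u i ≤ |v i * u i| := le_abs_self _
              _ = |v i| * |u i| := abs_mul _ _
              _ ≤ |v i| * (1 / c) :=
                  mul_le_mul_of_nonneg_left (le_trans h1 hub) (abs_nonneg _)
        _ = (∑ i, |v i|) / c := by rw [← Finset.sum_mul]; ring
    set u : Fin d → ℝ := (nrm w)⁻¹ • w with hu
    have hu1 : nrm u = 1 := by
      rw [hu, hnrm_smul, abs_of_pos (inv_pos.mpr hn), inv_mul_cancel₀ hn.ne']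
    have hmem : (∑ i, v i * u i) ∈ S := ⟨u, hu1, rfl⟩
    have hle : (∑ i, v i * u i) ≤ dnrm v := by
      rw [hdnrm]
      exact le_csSup hbdd hmem
    have heq : (∑ i, v i * w i) = nrm w * (∑ i, v i * u i) := by
      rw [Finset.mul_sum]
      apply Finset.sum_congr rfl
      intro i _
      simp only [hu, Pi.smul_apply, smul_eq_mul]
      field_simp
    rw [heq, mul_comm (dnrm v) (nrm w)]
    exact mul_le_mul_of_nonneg_left hle hn.le

/-- Regret bound for the (centralized) dual averaging / lazy
projection algorithm: with `z(t) = Σ_{s=1}^{t−1} g(s)` and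
`x(t) = argmin_{x ∈ X} { ⟨z(t), x⟩ + (1/α(t−1)) ψ(x) }`, for any `x* ∈ X`,
`Σ_{t=1}^T ⟨g(t), x(t) − x*⟩ ≤ (1/2) Σ_{t=1}^T α(t−1) ‖g(t)‖_*² + ψ(x*)/α(T)`. -/
theorem dual_averaging_regret {d : ℕ}
    (X : Set (Fin d → ℝ)) (hXclosed : IsClosed X) (hXconv : Convex ℝ X)
    (h0X : (0 : Fin d → ℝ) ∈ X)
    -- an arbitrary norm on ℝ^d and its dual norm
    (nrm : (Fin d → ℝ) → ℝ)
    (hnrm_nonneg : ∀ v, 0 ≤ nrm v)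
    (hnrm_eq_zero : ∀ v, nrm v = 0 ↔ v = 0)
    (hnrm_add : ∀ u v, nrm (u + v) ≤ nrm u + nrm v)
    (hnrm_smul : ∀ (c : ℝ) v, nrm (c • v) = |c| * nrm v)
    (dnrm : (Fin d → ℝ) → ℝ)
    (hdnrm : ∀ v, dnrm v = sSup {r | ∃ u : Fin d → ℝ, nrm u = 1 ∧ r = ∑ i, v i * u i})
    -- ψ is 1-strongly convex w.r.t. nrm, nonnegative on X, with ψ(0) = 0
    (ψ : (Fin d → ℝ) → ℝ)
    (hstrong : ∀ x ∈ X, ∀ y ∈ X, ∀ θ : ℝ, 0 ≤ θ → θ ≤ 1 →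
      ψ (θ • x + (1 - θ) • y) ≤
        θ * ψ x + (1 - θ) * ψ y - θ * (1 - θ) / 2 * nrm (x - y) ^ 2)
    (hψ_nonneg : ∀ x ∈ X, 0 ≤ ψ x) (hψ0 : ψ 0 = 0)
    -- time horizon, gradients, non-increasing positive stepsizes
    (T : ℕ) (hT : 1 ≤ T)
    (g : ℕ → (Fin d → ℝ))
    (α : ℕ → ℝ) (hαpos : ∀ t, 0 < α t) (hαanti : ∀ s t : ℕ, s ≤ t → α t ≤ α s)
    -- the dual averaging iterates
    (z x : ℕ → (Fin d → ℝ))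
    (hz : ∀ t : ℕ, z t = ∑ s ∈ Finset.Icc 1 (t - 1), g s)
    (hx_mem : ∀ t, x t ∈ X)
    (hx_min : ∀ t : ℕ, 1 ≤ t → ∀ y ∈ X,
      (∑ i, z t i * x t i) + (1 / α (t - 1)) * ψ (x t) ≤
        (∑ i, z t i * y i) + (1 / α (t - 1)) * ψ y)
    (xstar : Fin d → ℝ) (hxstar : xstar ∈ X) :
    ∑ t ∈ Finset.Icc 1 T, (∑ i, g t i * (x t i - xstar i)) ≤
      (1 / 2) * ∑ t ∈ Finset.Icc 1 T, α (t - 1) * dnrm (g t) ^ 2 +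
        (1 / α T) * ψ xstar := by
  have hzero : nrm 0 = 0 := da_nrm_zero nrm hnrm_eq_zero
  have pairing : ∀ v w, (∑ i, v i * w i) ≤ dnrm v * nrm w :=
    da_pairing nrm dnrm hnrm_nonneg hnrm_eq_zero hnrm_add hnrm_smul hdnrm
  obtain ⟨M, hM⟩ : ∃ M : ℕ → ℝ, M = fun t => (∑ i, z t i * x t i) + (1 / α (t - 1)) * ψ (x t) :=
    ⟨_, rfl⟩
  -- strong minimality of the dual averaging subproblem
  have strongmin : ∀ t : ℕ, 1 ≤ t → ∀ y ∈ X,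
      M t + (1 / α (t - 1)) / 2 * nrm (y - x t) ^ 2 ≤
        (∑ i, z t i * y i) + (1 / α (t - 1)) * ψ y := by
    intro t ht y hy
    have hhpos : 0 < 1 / α (t - 1) := one_div_pos.mpr (hαpos _)
    set h := 1 / α (t - 1) with hh
    set a := x t with ha
    set N := nrm (y - a) ^ 2 with hNdef
    have hN : 0 ≤ N := sq_nonneg _
    have key : ∀ θ : ℝ, 0 < θ → θ ≤ 1 →
        M t + h * ((1 - θ) / 2) * N ≤ (∑ i, z t i * y i) + h * ψ y := by
      intro θ hθ0 hθ1
      have hwX : θ • y + (1 - θ) • a ∈ X :=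
        hXconv hy (hx_mem t) hθ0.le (by linarith) (by ring)
      have hmin := hx_min t ht _ hwX
      have hψw := hstrong y hy a (hx_mem t) θ hθ0.le hθ1
      have hlin : (∑ i, z t i * (θ • y + (1 - θ) • a) i)
          = θ * (∑ i, z t i * y i) + (1 - θ) * (∑ i, z t i * a i) := by
        rw [Finset.mul_sum, Finset.mul_sum, ← Finset.sum_add_distrib]
        apply Finset.sum_congr rfl
        intro i _
        simp only [Pi.add_apply, Pi.smul_apply, smul_eq_mul]
        ring
      rw [hlin] at hmin
      have hψw' : h * ψ (θ • y + (1 - θ) • a)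
          ≤ h * (θ * ψ y + (1 - θ) * ψ a - θ * (1 - θ) / 2 * N) :=
        mul_le_mul_of_nonneg_left hψw hhpos.le
      have hg : θ * (M t + h * ((1 - θ) / 2) * N)
          ≤ θ * ((∑ i, z t i * y i) + h * ψ y) := by
        simp only [hM]
        nlinarith [hmin, hψw']
      exact le_of_mul_le_mul_left hg hθ0
    -- let θ → 0⁺
    have goal' : M t + h / 2 * N ≤ (∑ i, z t i * y i) + h * ψ y := by
      apply le_of_forall_pos_le_add
      intro ε hε
      set K := h / 2 * N with hK
      have hK0 : 0 ≤ K := by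
        rw [hK]; positivity
      set θ := min 1 (ε / (K + 1)) with hθ
      have hθ0 : 0 < θ := lt_min one_pos (div_pos hε (by linarith))
      have hθ1 : θ ≤ 1 := min_le_left _ _
      have hkey := key θ hθ0 hθ1
      have heq : h * ((1 - θ) / 2) * N = K - θ * K := by rw [hK]; ring
      rw [heq] at hkey
      have hθK : θ * K ≤ ε := by
        have h1 : θ ≤ ε / (K + 1) := min_le_right _ _
        have h2 : θ * K ≤ (ε / (K + 1)) * K := mul_le_mul_of_nonneg_right h1 hK0
        have h3 : (ε / (K + 1)) * K ≤ ε := by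
          rw [div_mul_eq_mul_div, div_le_iff₀ (by linarith : (0:ℝ) < K + 1)]
          nlinarith
        linarith
      linarith
    exact goal'
  -- recursion for z
  have hzsucc : ∀ t : ℕ, 1 ≤ t → ∀ i, z (t + 1) i = z t i + g t i := by
    intro t ht i
    obtain ⟨m, rfl⟩ : ∃ m, t = m + 1 := ⟨t - 1, by omega⟩
    have h1 : z (m + 1 + 1) = ∑ s ∈ Finset.Icc 1 (m + 1), g s := by
      rw [hz]; norm_num
    have h2 : z (m + 1) = ∑ s ∈ Finset.Icc 1 m, g s := by
      rw [hz]; norm_num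
    rw [h1, h2, Finset.sum_Icc_succ_top (by omega : 1 ≤ m + 1)]
    simp
  -- one-step inequality
  have step : ∀ t : ℕ, 1 ≤ t →
      M t + (∑ i, g t i * x t i) - α (t - 1) / 2 * dnrm (g t) ^ 2 ≤ M (t + 1) := by
    intro t ht
    have hψx1 : 0 ≤ ψ (x (t + 1)) := hψ_nonneg _ (hx_mem _)
    have hαle : α t ≤ α (t - 1) := hαanti (t - 1) t (by omega)
    have hhle : 1 / α (t - 1) ≤ 1 / α t := one_div_le_one_div_of_le (hαpos t) hαle
    have hM1 : M (t + 1) = (∑ i, z (t + 1) i * x (t + 1) i) + (1 / α t) * ψ (x (t + 1)) := by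
      simp only [hM, Nat.add_sub_cancel]
    have hsplit : (∑ i, z (t + 1) i * x (t + 1) i)
        = (∑ i, z t i * x (t + 1) i) + (∑ i, g t i * x (t + 1) i) := by
      rw [← Finset.sum_add_distrib]
      apply Finset.sum_congr rfl
      intro i _
      rw [hzsucc t ht i]; ring
    have hsm := strongmin t ht (x (t + 1)) (hx_mem (t + 1))
    have hpair := pairing (g t) (x t - x (t + 1))
    have hsym : nrm (x t - x (t + 1)) = nrm (x (t + 1) - x t) := by
      have h := hnrm_smul (-1 : ℝ) (x (t + 1) - x t)
      rw [neg_one_smul, neg_sub] at h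
      simpa using h
    rw [hsym] at hpair
    have hgs : (∑ i, g t i * ((x t - x (t + 1)) i))
        = (∑ i, g t i * x t i) - (∑ i, g t i * x (t + 1) i) := by
      rw [← Finset.sum_sub_distrib]
      apply Finset.sum_congr rfl
      intro i _
      simp only [Pi.sub_apply]
      ring
    rw [hgs] at hpair
    have hinv : (1 / α (t - 1)) * α (t - 1) = 1 :=
      one_div_mul_cancel (hαpos (t - 1)).ne'
    have hquad : dnrm (g t) * nrm (x (t + 1) - x t)
        ≤ α (t - 1) / 2 * dnrm (g t) ^ 2 + (1 / α (t - 1)) / 2 * nrm (x (t + 1) - x t) ^ 2 := by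
      nlinarith [sq_nonneg (α (t - 1) * dnrm (g t) - nrm (x (t + 1) - x t)), hαpos (t - 1),
        hinv, sq_nonneg (nrm (x (t + 1) - x t))]
    have hmono : (1 / α (t - 1)) * ψ (x (t + 1)) ≤ (1 / α t) * ψ (x (t + 1)) :=
      mul_le_mul_of_nonneg_right hhle hψx1
    rw [hM1, hsplit]
    linarith
  -- telescoping
  have tele : ∀ n : ℕ, M 1 + (∑ t ∈ Finset.Icc 1 n, (∑ i, g t i * x t i))
      - (∑ t ∈ Finset.Icc 1 n, α (t - 1) / 2 * dnrm (g t) ^ 2) ≤ M (n + 1) := by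
    intro n
    induction n with
    | zero => simp
    | succ m ih =>
      rw [Finset.sum_Icc_succ_top (by omega : 1 ≤ m + 1),
        Finset.sum_Icc_succ_top (by omega : 1 ≤ m + 1)]
      have hstep := step (m + 1) (by omega)
      simp only [Nat.add_sub_cancel] at hstep ⊢
      linarith
  -- M 1 is nonnegative
  have hM1pos : 0 ≤ M 1 := by
    have hz1 : z 1 = 0 := by rw [hz]; simp
    have : M 1 = (1 / α 0) * ψ (x 1) := by
      simp [hM, hz1]
    rw [this]
    exact mul_nonneg (one_div_pos.mpr (hαpos 0)).le (hψ_nonneg _ (hx_mem 1))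
  -- upper bound on M (T+1)
  have hupper : M (T + 1) ≤ (∑ t ∈ Finset.Icc 1 T, (∑ i, g t i * xstar i))
      + (1 / α T) * ψ xstar := by
    have hmin := hx_min (T + 1) (by omega) xstar hxstar
    simp only [Nat.add_sub_cancel] at hmin
    have hzT : (∑ i, z (T + 1) i * xstar i)
        = ∑ t ∈ Finset.Icc 1 T, (∑ i, g t i * xstar i) := by
      have hzT1 : z (T + 1) = ∑ t ∈ Finset.Icc 1 T, g t := by
        rw [hz]; norm_num
      rw [hzT1]
      calc (∑ i, (∑ t ∈ Finset.Icc 1 T, g t) i * xstar i)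
          = ∑ i, ∑ t ∈ Finset.Icc 1 T, g t i * xstar i := by
            apply Finset.sum_congr rfl
            intro i _
            rw [Finset.sum_apply, Finset.sum_mul]
        _ = ∑ t ∈ Finset.Icc 1 T, ∑ i, g t i * xstar i := Finset.sum_comm
    have hMT : M (T + 1) = (∑ i, z (T + 1) i * x (T + 1) i) + (1 / α T) * ψ (x (T + 1)) := by
      simp only [hM, Nat.add_sub_cancel]
    rw [hMT, ← hzT]
    exact hmin
  -- final assembly
  have hLHS : ∑ t ∈ Finset.Icc 1 T, (∑ i, g t i * (x t i - xstar i))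
      = (∑ t ∈ Finset.Icc 1 T, (∑ i, g t i * x t i))
        - (∑ t ∈ Finset.Icc 1 T, (∑ i, g t i * xstar i)) := by
    rw [← Finset.sum_sub_distrib]
    apply Finset.sum_congr rfl
    intro t _
    rw [← Finset.sum_sub_distrib]
    apply Finset.sum_congr rfl
    intro i _
    ring
  have hhalf : (1 / 2) * (∑ t ∈ Finset.Icc 1 T, α (t - 1) * dnrm (g t) ^ 2)
      = ∑ t ∈ Finset.Icc 1 T, α (t - 1) / 2 * dnrm (g t) ^ 2 := by
    rw [Finset.mul_sum]
    apply Finset.sum_congr rfl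
    intro t _
    ring
  rw [hLHS, hhalf]
  linarith [tele T, hupper, hM1pos]
end

section
/- Let G be a connected undirected graph on n vertices with adjacency matrix A, degree matrix D, minimum degree δ_min and maximum degree δ_max, and normalized Laplacian L = I − D^{−1/2} A D^{−1/2}. For P = I − (1/(δ_max + 1))(D − A), the second largest singular value satisfies σ₂(P) ≤ max{ 1 − (δ_min/(δ_max+1)) λ_{n−1}(L), (δ_max/(δ_max+1)) λ₁(L) − 1 }, where λ₁(L) ≥ ⋯ ≥ λ_n(L) = 0 are the eigenvalues of L. -/
open Matrix

/-- The ℓ₂ norm on ℝⁿ. -/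
noncomputable def l2norm {n : ℕ} (v : Fin n → ℝ) : ℝ := Real.sqrt (∑ i, v i ^ 2)

/-- The uniform averaging matrix `F = (1/n)𝟙𝟙ᵀ`. -/
noncomputable def uniformMatrix (n : ℕ) : Matrix (Fin n) (Fin n) ℝ :=
  Matrix.of fun _ _ => (1 : ℝ) / n

/-- The second largest singular value of a doubly stochastic matrix `P`, which
equals the largest singular value (ℓ₂ operator norm) of `P − F`. -/
noncomputable def sigma2 {n : ℕ} (P : Matrix (Fin n) (Fin n) ℝ) : ℝ :=
  sSup {r | ∃ x : Fin n → ℝ, l2norm x ≤ 1 ∧ r = l2norm ((P - uniformMatrix n).mulVec x)}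

lemma dot_symm {n : ℕ} {M : Matrix (Fin n) (Fin n) ℝ} (hM : Mᵀ = M) (v w : Fin n → ℝ) :
    v ⬝ᵥ M *ᵥ w = (M *ᵥ v) ⬝ᵥ w := by
  rw [dotProduct_mulVec]
  congr 1
  conv_lhs => rw [← hM]
  rw [vecMul_transpose]

lemma opnorm_of_qform {n : ℕ} (M : Matrix (Fin n) (Fin n) ℝ) (hM : Mᵀ = M) (c : ℝ) (hc : 0 ≤ c)
    (h : ∀ x : Fin n → ℝ, |x ⬝ᵥ M *ᵥ x| ≤ c * (x ⬝ᵥ x)) (x : Fin n → ℝ) :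
    (M *ᵥ x) ⬝ᵥ (M *ᵥ x) ≤ c ^ 2 * (x ⬝ᵥ x) := by
  set v := M *ᵥ x with hv
  have key : ∀ a : ℝ, 4 * a * (v ⬝ᵥ v) ≤ 2 * c * ((a • x) ⬝ᵥ (a • x) + v ⬝ᵥ v) := by
    intro a
    have e1 := h (a • x + v)
    have e2 := h (a • x - v)
    have hxv : x ⬝ᵥ (M *ᵥ v) = v ⬝ᵥ v := by
      rw [dot_symm hM, ← hv]
    have hvx : v ⬝ᵥ (M *ᵥ x) = v ⬝ᵥ v := by rw [← hv]
    have q1 : (a • x + v) ⬝ᵥ M *ᵥ (a • x + v)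
        = a ^ 2 * (x ⬝ᵥ M *ᵥ x) + 2 * a * (v ⬝ᵥ v) + v ⬝ᵥ M *ᵥ v := by
      simp only [mulVec_add, mulVec_smul, dotProduct_add, add_dotProduct,
        dotProduct_smul, smul_dotProduct, smul_eq_mul, hxv, hvx]
      ring
    have q2 : (a • x - v) ⬝ᵥ M *ᵥ (a • x - v)
        = a ^ 2 * (x ⬝ᵥ M *ᵥ x) - 2 * a * (v ⬝ᵥ v) + v ⬝ᵥ M *ᵥ v := by
      simp only [mulVec_sub, mulVec_smul, dotProduct_sub, sub_dotProduct,
        dotProduct_smul, smul_dotProduct, smul_eq_mul, hxv, hvx]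
      ring
    have n1 : (a • x + v) ⬝ᵥ (a • x + v)
        = (a • x) ⬝ᵥ (a • x) + 2 * ((a • x) ⬝ᵥ v) + v ⬝ᵥ v := by
      simp only [dotProduct_add, add_dotProduct]
      rw [show v ⬝ᵥ (a • x) = (a • x) ⬝ᵥ v from dotProduct_comm _ _]
      ring
    have n2 : (a • x - v) ⬝ᵥ (a • x - v)
        = (a • x) ⬝ᵥ (a • x) - 2 * ((a • x) ⬝ᵥ v) + v ⬝ᵥ v := by
      simp only [dotProduct_sub, sub_dotProduct]
      rw [show v ⬝ᵥ (a • x) = (a • x) ⬝ᵥ v from dotProduct_comm _ _]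
      ring
    have b1 := (abs_le.mp e1).2
    have b2 := (abs_le.mp e2).1
    rw [q1, n1] at b1
    rw [q2, n2] at b2
    nlinarith [b1, b2]
  rcases eq_or_lt_of_le hc with rfl | hcpos
  · have := key 1
    simp only [one_smul] at this
    have hvv : (0:ℝ) ≤ v ⬝ᵥ v := Finset.sum_nonneg fun i _ => mul_self_nonneg (v i)
    nlinarith
  · have := key c
    have hsm : (c • x) ⬝ᵥ (c • x) = c ^ 2 * (x ⬝ᵥ x) := by
      simp [dotProduct_smul, smul_dotProduct, smul_eq_mul]; ring
    rw [hsm] at this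
    nlinarith

/-- For the matrix `P = I − (1/(δ_max+1))(D − A)` of a connected
graph, `σ₂(P) ≤ max{ 1 − (δ_min/(δ_max+1)) λ_{n−1}(L), (δ_max/(δ_max+1)) λ₁(L) − 1 }`,
where `λ₁(L)` is the largest and `λ_{n−1}(L)` the second smallest eigenvalue of the
normalized Laplacian `L = I − D^{−1/2} A D^{−1/2}` (whose smallest eigenvalue,
with eigenvector `D^{1/2}𝟙`, is `λ_n(L) = 0`).  The eigenvalues `λ₁(L)` and
`λ_{n−1}(L)` are characterized variationally. -/
theorem sigma2_le_laplacian_bound {n : ℕ} (hn : 0 < n)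
    (A : Matrix (Fin n) (Fin n) ℝ)
    (hsym : Aᵀ = A)
    (h01 : ∀ i j, A i j = 0 ∨ A i j = 1)
    (hdiag : ∀ i, A i i = 0)
    (δ : Fin n → ℝ) (hδ : ∀ i, δ i = ∑ j, A i j)
    (hδ_pos : ∀ i, 1 ≤ δ i)
    (dmax : ℝ) (hdmax_ub : ∀ i, δ i ≤ dmax) (hdmax_mem : ∃ i, δ i = dmax)
    (dmin : ℝ) (hdmin_lb : ∀ i, dmin ≤ δ i) (hdmin_mem : ∃ i, δ i = dmin)
    (L : Matrix (Fin n) (Fin n) ℝ)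
    (hL : ∀ i j, L i j =
      (if i = j then (1 : ℝ) else 0) - A i j / (Real.sqrt (δ i) * Real.sqrt (δ j)))
    -- λ₁(L): the largest eigenvalue of L, characterized variationally
    (lam1 : ℝ)
    (hlam1_ub : ∀ x : Fin n → ℝ, (∑ i, x i * (L.mulVec x) i) ≤ lam1 * ∑ i, x i ^ 2)
    (hlam1_ach : ∃ x : Fin n → ℝ, x ≠ 0 ∧ (∑ i, x i * (L.mulVec x) i) = lam1 * ∑ i, x i ^ 2)
    -- λ_{n−1}(L): the second smallest eigenvalue of L, characterized
    -- variationally over the orthogonal complement of D^{1/2}𝟙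
    (lam : ℝ)
    (hlam_lb : ∀ x : Fin n → ℝ, (∑ i, x i * Real.sqrt (δ i)) = 0 →
      lam * (∑ i, x i ^ 2) ≤ ∑ i, x i * (L.mulVec x) i)
    (hlam_ach : ∃ x : Fin n → ℝ, x ≠ 0 ∧ (∑ i, x i * Real.sqrt (δ i)) = 0 ∧
      (∑ i, x i * (L.mulVec x) i) = lam * ∑ i, x i ^ 2)
    (P : Matrix (Fin n) (Fin n) ℝ)
    (hP : P = 1 - (1 / (dmax + 1)) • (Matrix.diagonal δ - A)) :
    sigma2 P ≤ max (1 - dmin / (dmax + 1) * lam) (dmax / (dmax + 1) * lam1 - 1) := by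
  have hne : Nonempty (Fin n) := ⟨⟨0, hn⟩⟩
  obtain ⟨i0, hi0⟩ := hdmin_mem
  have hdmin1 : (1:ℝ) ≤ dmin := hi0 ▸ hδ_pos i0
  have hdminmax : dmin ≤ dmax := hi0 ▸ hdmax_ub i0
  have hdmax1 : (1:ℝ) ≤ dmax := le_trans hdmin1 hdminmax
  have hd1 : (0:ℝ) < dmax + 1 := by linarith
  have hδ0 : ∀ i, (0:ℝ) < δ i := fun i => lt_of_lt_of_le one_pos (hδ_pos i)
  have hsd : ∀ i, 0 < Real.sqrt (δ i) := fun i => Real.sqrt_pos.mpr (hδ0 i)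
  have hsq : ∀ i, Real.sqrt (δ i) * Real.sqrt (δ i) = δ i :=
    fun i => Real.mul_self_sqrt (hδ0 i).le
  have hA : ∀ i j, A j i = A i j := fun i j => (congrFun (congrFun hsym j) i).symm
  have hA0 : ∀ i j, (0:ℝ) ≤ A i j := fun i j => by
    rcases h01 i j with h | h <;> rw [h] <;> norm_num
  set c : ℝ := max (1 - dmin / (dmax + 1) * lam) (dmax / (dmax + 1) * lam1 - 1) with hc
  -- L is symmetric
  have Lsym : Lᵀ = L := by
    ext i j
    rw [transpose_apply, hL i j, hL j i, hA, mul_comm]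
    congr 1
    simp [eq_comm]
  have DAsym : (Matrix.diagonal δ - A)ᵀ = Matrix.diagonal δ - A := by
    rw [transpose_sub, diagonal_transpose, hsym]
  -- quadratic form expansions
  have hQD : ∀ y : Fin n → ℝ, y ⬝ᵥ (Matrix.diagonal δ - A) *ᵥ y
      = (∑ i, δ i * (y i * y i)) - ∑ i, ∑ j, A i j * (y i * y j) := by
    intro y
    rw [sub_mulVec, dotProduct_sub]
    congr 1
    · simp only [dotProduct, mulVec_diagonal]
      exact Finset.sum_congr rfl fun i _ => by ring
    · simp only [dotProduct, mulVec, Finset.mul_sum]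
      exact Finset.sum_congr rfl fun i _ => Finset.sum_congr rfl fun j _ => by ring
  -- key identity: Q(y) = z ⬝ L z with z = √δ ∘ y
  have hZL : ∀ y : Fin n → ℝ,
      (fun i => Real.sqrt (δ i) * y i) ⬝ᵥ L *ᵥ (fun i => Real.sqrt (δ i) * y i)
      = y ⬝ᵥ (Matrix.diagonal δ - A) *ᵥ y := by
    intro y
    rw [hQD y]
    have hterm : ∀ i j, (Real.sqrt (δ i) * y i) * (L i j * (Real.sqrt (δ j) * y j))
        = (if i = j then δ i * (y i * y j) else 0) - A i j * (y i * y j) := by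
      intro i j
      rw [hL i j]
      rcases eq_or_ne i j with rfl | hij
      · simp only [eq_self_iff_true, if_true, hdiag i, zero_div, sub_zero]
        linear_combination (y i * y i) * hsq i
      · rw [if_neg hij, if_neg hij, zero_sub, zero_sub]
        field_simp [(hsd i).ne', (hsd j).ne']
    have lhs_eq : (fun i => Real.sqrt (δ i) * y i) ⬝ᵥ L *ᵥ (fun i => Real.sqrt (δ i) * y i)
        = ∑ i, ∑ j, ((if i = j then δ i * (y i * y j) else 0) - A i j * (y i * y j)) := by
      simp only [dotProduct, mulVec, Finset.mul_sum]
      exact Finset.sum_congr rfl fun i _ => Finset.sum_congr rfl fun j _ => hterm i j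
    rw [lhs_eq]
    have e : ∀ i : Fin n,
        ∑ j, ((if i = j then δ i * (y i * y j) else 0) - A i j * (y i * y j))
        = δ i * (y i * y i) - ∑ j, A i j * (y i * y j) := by
      intro i
      rw [Finset.sum_sub_distrib, Finset.sum_ite_eq]
      simp
    rw [Finset.sum_congr rfl fun i _ => e i, Finset.sum_sub_distrib]
  -- positivity of Q
  have hQpos : ∀ y : Fin n → ℝ, 0 ≤ y ⬝ᵥ (Matrix.diagonal δ - A) *ᵥ y := by
    intro y
    have hδexp : ∑ i, δ i * (y i * y i) = ∑ i, ∑ j, A i j * (y i * y i) := by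
      refine Finset.sum_congr rfl fun i _ => ?_
      rw [hδ i, Finset.sum_mul]
    have hswap : ∑ i, ∑ j, A i j * (y j * y j) = ∑ i, ∑ j, A i j * (y i * y i) := by
      rw [Finset.sum_comm]
      exact Finset.sum_congr rfl fun i _ => Finset.sum_congr rfl fun j _ => by rw [hA]
    have hsq2 : (0:ℝ) ≤ ∑ i, ∑ j, A i j * (y i - y j)^2 :=
      Finset.sum_nonneg fun i _ => Finset.sum_nonneg fun j _ =>
        mul_nonneg (hA0 i j) (sq_nonneg _)
    have hexpand : ∑ i, ∑ j, A i j * (y i - y j)^2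
        = ∑ i, ∑ j, (A i j * (y i * y i) + A i j * (y j * y j)
            - 2 * (A i j * (y i * y j))) := by
      exact Finset.sum_congr rfl fun i _ => Finset.sum_congr rfl fun j _ => by ring
    have row : ∀ i : Fin n, ∑ j, (A i j * (y i * y i) + A i j * (y j * y j)
            - 2 * (A i j * (y i * y j)))
        = (∑ j, A i j * (y i * y i)) + (∑ j, A i j * (y j * y j))
          - 2 * ∑ j, A i j * (y i * y j) := by
      intro i
      rw [Finset.sum_sub_distrib, Finset.sum_add_distrib, Finset.mul_sum]
    have hsplit : ∑ i, ∑ j, (A i j * (y i * y i) + A i j * (y j * y j)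
            - 2 * (A i j * (y i * y j)))
        = (∑ i, ∑ j, A i j * (y i * y i)) + (∑ i, ∑ j, A i j * (y j * y j))
          - 2 * ∑ i, ∑ j, A i j * (y i * y j) := by
      rw [Finset.sum_congr rfl fun i _ => row i, Finset.sum_sub_distrib,
        Finset.sum_add_distrib, Finset.mul_sum]
    rw [hQD y, hδexp]
    rw [hexpand, hsplit, hswap] at hsq2
    linarith
  -- nonnegativity of lam, lam ≤ lam1
  obtain ⟨x0, hx0ne, hx0orth, hx0eq⟩ := hlam_ach
  have hx0pos : 0 < ∑ i, x0 i ^ 2 := by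
    obtain ⟨i, hi⟩ := Function.ne_iff.mp hx0ne
    exact Finset.sum_pos' (fun j _ => sq_nonneg _)
      ⟨i, Finset.mem_univ i, sq_pos_of_ne_zero hi⟩
  have hx0val : 0 ≤ ∑ i, x0 i * (L.mulVec x0) i := by
    have hfun : (fun i => Real.sqrt (δ i) * (x0 i / Real.sqrt (δ i))) = x0 := by
      funext i
      rw [mul_comm, div_mul_cancel₀ _ (hsd i).ne']
    have e := hZL (fun i => x0 i / Real.sqrt (δ i))
    rw [hfun] at e
    have : (∑ i, x0 i * (L.mulVec x0) i) = x0 ⬝ᵥ L *ᵥ x0 := rfl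
    rw [this, e]
    exact hQpos _
  have hlam0 : 0 ≤ lam := by
    rw [hx0eq] at hx0val
    nlinarith
  have hlam1lam : lam ≤ lam1 := by
    have := hlam1_ub x0
    rw [hx0eq] at this
    exact le_of_mul_le_mul_right this hx0pos
  have hlam10 : 0 ≤ lam1 := le_trans hlam0 hlam1lam
  have hc0 : 0 ≤ c := by
    have h1 : (1 - dmin / (dmax + 1) * lam) ≤ c := le_max_left _ _
    have h2 : (dmax / (dmax + 1) * lam1 - 1) ≤ c := le_max_right _ _
    have key : dmin * lam ≤ dmax * lam1 := by nlinarith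
    have hdiv : dmin / (dmax + 1) * lam ≤ dmax / (dmax + 1) * lam1 := by
      rw [div_mul_eq_mul_div, div_mul_eq_mul_div]
      exact (div_le_div_iff_of_pos_right hd1).mpr key
    linarith
  -- upper bound on Q
  have hQub : ∀ y : Fin n → ℝ,
      y ⬝ᵥ (Matrix.diagonal δ - A) *ᵥ y ≤ dmax * lam1 * ∑ i, y i ^ 2 := by
    intro y
    rw [← hZL y]
    have h1 := hlam1_ub (fun i => Real.sqrt (δ i) * y i)
    have e2 : ∑ i, (Real.sqrt (δ i) * y i) ^ 2 = ∑ i, δ i * y i ^ 2 :=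
      Finset.sum_congr rfl fun i _ => by
        rw [mul_pow, Real.sq_sqrt (hδ0 i).le]
    have e3 : ∑ i, δ i * y i ^ 2 ≤ dmax * ∑ i, y i ^ 2 := by
      rw [Finset.mul_sum]
      exact Finset.sum_le_sum fun i _ =>
        mul_le_mul_of_nonneg_right (hdmax_ub i) (sq_nonneg _)
    calc (fun i => Real.sqrt (δ i) * y i) ⬝ᵥ L *ᵥ (fun i => Real.sqrt (δ i) * y i)
        ≤ lam1 * ∑ i, (Real.sqrt (δ i) * y i) ^ 2 := h1
      _ = lam1 * ∑ i, δ i * y i ^ 2 := by rw [e2]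
      _ ≤ lam1 * (dmax * ∑ i, y i ^ 2) := mul_le_mul_of_nonneg_left e3 hlam10
      _ = dmax * lam1 * ∑ i, y i ^ 2 := by ring
  -- lower bound on Q for mean-zero y
  have hQlb : ∀ y : Fin n → ℝ, (∑ i, y i) = 0 →
      dmin * lam * (∑ i, y i ^ 2) ≤ y ⬝ᵥ (Matrix.diagonal δ - A) *ᵥ y := by
    intro y hy
    have hLw : L *ᵥ (fun i => Real.sqrt (δ i)) = 0 := by
      funext i
      show ∑ j, L i j * Real.sqrt (δ j) = 0
      have hterm : ∀ j, L i j * Real.sqrt (δ j)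
          = (if i = j then Real.sqrt (δ j) else 0) - A i j / Real.sqrt (δ i) := by
        intro j
        rw [hL i j]
        rcases eq_or_ne i j with rfl | hij
        · simp [hdiag i]
        · rw [if_neg hij, if_neg hij, zero_sub, zero_sub, neg_mul, neg_inj,
            div_mul_eq_mul_div, mul_comm (Real.sqrt (δ i)) (Real.sqrt (δ j)),
            ← div_div, mul_div_assoc, div_self (hsd j).ne', mul_one]
      calc ∑ j, L i j * Real.sqrt (δ j)
          = ∑ j, ((if i = j then Real.sqrt (δ j) else 0) - A i j / Real.sqrt (δ i)) :=
            Finset.sum_congr rfl fun j _ => hterm j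
        _ = Real.sqrt (δ i) - (∑ j, A i j) / Real.sqrt (δ i) := by
            rw [Finset.sum_sub_distrib, Finset.sum_ite_eq, ← Finset.sum_div]
            simp
        _ = 0 := by
            rw [← hδ i, Real.div_sqrt, sub_self]
    have hS : 0 < ∑ i, δ i := Finset.sum_pos (fun i _ => hδ0 i) Finset.univ_nonempty
    set s : ℝ := (∑ i, δ i * y i) / (∑ i, δ i) with hs
    set z' : Fin n → ℝ := fun i => Real.sqrt (δ i) * (y i - s) with hz'
    have horth : ∑ i, z' i * Real.sqrt (δ i) = 0 := by
      have h1 : ∀ i, z' i * Real.sqrt (δ i) = δ i * y i - δ i * s := by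
        intro i
        rw [hz']
        linear_combination (y i - s) * hsq i
      calc ∑ i, z' i * Real.sqrt (δ i) = ∑ i, (δ i * y i - δ i * s) :=
            Finset.sum_congr rfl fun i _ => h1 i
        _ = (∑ i, δ i * y i) - (∑ i, δ i) * s := by
            rw [Finset.sum_sub_distrib, ← Finset.sum_mul]
        _ = 0 := by
            rw [hs, mul_div_cancel₀ _ hS.ne']
            ring
    have hlow := hlam_lb z' horth
    have hzz : z' = (fun i => Real.sqrt (δ i) * y i) - s • (fun i => Real.sqrt (δ i)) := by
      funext i
      simp [hz']
      ring
    have heq : z' ⬝ᵥ L *ᵥ z'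
        = (fun i => Real.sqrt (δ i) * y i) ⬝ᵥ L *ᵥ (fun i => Real.sqrt (δ i) * y i) := by
      rw [hzz, mulVec_sub, mulVec_smul, hLw, smul_zero, sub_zero, sub_dotProduct,
        smul_dotProduct, dot_symm Lsym (fun i => Real.sqrt (δ i)) _, hLw,
        zero_dotProduct, smul_zero, sub_zero]
    have hz'sq : ∑ i, z' i ^ 2 = ∑ i, δ i * (y i - s) ^ 2 :=
      Finset.sum_congr rfl fun i _ => by
        rw [hz', mul_pow, Real.sq_sqrt (hδ0 i).le]
    have h1 : dmin * (∑ i, (y i - s) ^ 2) ≤ ∑ i, δ i * (y i - s) ^ 2 := by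
      rw [Finset.mul_sum]
      exact Finset.sum_le_sum fun i _ =>
        mul_le_mul_of_nonneg_right (hdmin_lb i) (sq_nonneg _)
    have h2 : ∑ i, y i ^ 2 ≤ ∑ i, (y i - s) ^ 2 := by
      have expand : ∑ i, (y i - s) ^ 2
          = (∑ i, y i ^ 2) - 2 * s * (∑ i, y i) + n * s ^ 2 := by
        have : ∀ i : Fin n, (y i - s) ^ 2 = (y i ^ 2 - 2 * s * y i) + s ^ 2 := by
          intro i; ring
        rw [Finset.sum_congr rfl fun i _ => this i, Finset.sum_add_distrib,
          Finset.sum_sub_distrib, Finset.sum_const, Finset.card_univ,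
          Fintype.card_fin, nsmul_eq_mul, ← Finset.mul_sum]
      rw [expand, hy]
      have : 0 ≤ (n:ℝ) * s ^ 2 := by positivity
      linarith
    have hdmin0 : (0:ℝ) ≤ dmin := by linarith
    have chain : dmin * lam * (∑ i, y i ^ 2) ≤ lam * ∑ i, z' i ^ 2 := by
      rw [hz'sq]
      have step : dmin * (∑ i, y i ^ 2) ≤ ∑ i, δ i * (y i - s) ^ 2 :=
        le_trans (mul_le_mul_of_nonneg_left h2 hdmin0) h1
      calc dmin * lam * (∑ i, y i ^ 2) = lam * (dmin * ∑ i, y i ^ 2) := by ring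
        _ ≤ lam * ∑ i, δ i * (y i - s) ^ 2 := mul_le_mul_of_nonneg_left step hlam0
    have hfin : (∑ i, z' i * (L.mulVec z') i) = y ⬝ᵥ (Matrix.diagonal δ - A) *ᵥ y := by
      have : (∑ i, z' i * (L.mulVec z') i) = z' ⬝ᵥ L *ᵥ z' := rfl
      rw [this, heq, hZL y]
    linarith [hlow, chain, hfin.ge, hfin.le]
  -- quadratic form bound for P - F
  have hq : ∀ x : Fin n → ℝ, |x ⬝ᵥ (P - uniformMatrix n) *ᵥ x| ≤ c * (x ⬝ᵥ x) := by
    intro x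
    have hn' : (0:ℝ) < n := Nat.cast_pos.mpr hn
    set m : ℝ := (∑ i, x i) / n with hm
    set y : Fin n → ℝ := fun i => x i - m with hy
    have hsy : ∑ i, y i = 0 := by
      simp only [hy]
      rw [Finset.sum_sub_distrib, Finset.sum_const, Finset.card_univ,
        Fintype.card_fin, nsmul_eq_mul, hm]
      field_simp
      ring
    have hxy : x = y + fun _ => m := by
      funext i
      simp [hy]
    have hconst : (Matrix.diagonal δ - A) *ᵥ (fun _ => m) = 0 := by
      rw [sub_mulVec]
      funext i
      simp only [Pi.sub_apply, Pi.zero_apply, mulVec_diagonal]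
      have : (A *ᵥ fun _ => m) i = (∑ j, A i j) * m := by
        simp [mulVec, dotProduct, Finset.sum_mul]
      rw [this, ← hδ i]
      ring
    have hDAx : (Matrix.diagonal δ - A) *ᵥ x = (Matrix.diagonal δ - A) *ᵥ y := by
      conv_lhs => rw [hxy]
      rw [mulVec_add, hconst, add_zero]
    have hxDAy : x ⬝ᵥ (Matrix.diagonal δ - A) *ᵥ y = y ⬝ᵥ (Matrix.diagonal δ - A) *ᵥ y := by
      conv_lhs => rw [hxy]
      rw [add_dotProduct]
      have : (fun _ => m) ⬝ᵥ (Matrix.diagonal δ - A) *ᵥ y = 0 := by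
        rw [dot_symm DAsym, hconst, zero_dotProduct]
      rw [this, add_zero]
    have hFx : (uniformMatrix n) *ᵥ x = fun _ => m := by
      funext i
      show ∑ j, (1/(n:ℝ)) * x j = m
      rw [← Finset.mul_sum, hm]
      ring
    have hxFx : x ⬝ᵥ (uniformMatrix n *ᵥ x) = (∑ i, x i) * m := by
      rw [hFx]
      simp [dotProduct, ← Finset.sum_mul]
    have hsplit : x ⬝ᵥ (P - uniformMatrix n) *ᵥ x
        = (∑ i, y i ^ 2) - (1/(dmax+1)) * (y ⬝ᵥ (Matrix.diagonal δ - A) *ᵥ y) := by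
      rw [sub_mulVec, dotProduct_sub, hP, sub_mulVec, one_mulVec, dotProduct_sub,
        smul_mulVec, dotProduct_smul, smul_eq_mul, hDAx, hxDAy, hxFx]
      have hxx : x ⬝ᵥ x - (∑ i, x i) * m = ∑ i, y i ^ 2 := by
        have hdot : x ⬝ᵥ x = ∑ i, x i ^ 2 := by
          simp [dotProduct, sq]
        have expand : ∑ i, y i ^ 2
            = (∑ i, x i ^ 2) - 2 * m * (∑ i, x i) + n * m ^ 2 := by
          have : ∀ i : Fin n, y i ^ 2 = (x i ^ 2 - 2 * m * x i) + m ^ 2 := by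
            intro i; simp only [hy]; ring
          rw [Finset.sum_congr rfl fun i _ => this i, Finset.sum_add_distrib,
            Finset.sum_sub_distrib, Finset.sum_const, Finset.card_univ,
            Fintype.card_fin, nsmul_eq_mul, ← Finset.mul_sum]
        have hnm : (n:ℝ) * m = ∑ i, x i := by
          rw [hm]
          field_simp
        have hnm2 : (n:ℝ) * m ^ 2 = (∑ i, x i) * m := by
          rw [← hnm]; ring
        rw [hdot, expand, hnm2]
        linarith [hnm]
      linarith [hxx]
    have hyy0 : (0:ℝ) ≤ ∑ i, y i ^ 2 := Finset.sum_nonneg fun i _ => sq_nonneg _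
    have hyx : ∑ i, y i ^ 2 ≤ x ⬝ᵥ x := by
      have hsm : (∑ i, x i) * m = (∑ i, x i) ^ 2 / n := by
        rw [hm]; ring
      have h0 : 0 ≤ (∑ i, x i) ^ 2 / n := by positivity
      have hxx : x ⬝ᵥ x - (∑ i, x i) * m = ∑ i, y i ^ 2 := by
        have hdot : x ⬝ᵥ x = ∑ i, x i ^ 2 := by simp [dotProduct, sq]
        have expand : ∑ i, y i ^ 2
            = (∑ i, x i ^ 2) - 2 * m * (∑ i, x i) + n * m ^ 2 := by
          have : ∀ i : Fin n, y i ^ 2 = (x i ^ 2 - 2 * m * x i) + m ^ 2 := by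
            intro i; simp only [hy]; ring
          rw [Finset.sum_congr rfl fun i _ => this i, Finset.sum_add_distrib,
            Finset.sum_sub_distrib, Finset.sum_const, Finset.card_univ,
            Fintype.card_fin, nsmul_eq_mul, ← Finset.mul_sum]
        have hnm : (n:ℝ) * m = ∑ i, x i := by
          rw [hm]; field_simp
        have hnm2 : (n:ℝ) * m ^ 2 = (∑ i, x i) * m := by
          rw [← hnm]; ring
        rw [hdot, expand, hnm2]
        linarith [hnm]
      linarith [hsm ▸ h0, hxx]
    have htpos : (0:ℝ) < 1/(dmax+1) := by positivity
    have a1 : (1 - dmin / (dmax + 1) * lam) ≤ c := le_max_left _ _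
    have a2 : (dmax / (dmax + 1) * lam1 - 1) ≤ c := le_max_right _ _
    have hQl := hQlb y hsy
    have hQu := hQub y
    rw [hsplit, abs_le]
    constructor
    · -- lower bound
      have p4 : (1/(dmax+1)) * (y ⬝ᵥ (Matrix.diagonal δ - A) *ᵥ y)
          ≤ (1/(dmax+1)) * (dmax * lam1 * ∑ i, y i ^ 2) :=
        mul_le_mul_of_nonneg_left hQu htpos.le
      have p5 : (dmax / (dmax + 1) * lam1 - 1) * (∑ i, y i ^ 2) ≤ c * (∑ i, y i ^ 2) :=
        mul_le_mul_of_nonneg_right a2 hyy0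
      have p3 : c * (∑ i, y i ^ 2) ≤ c * (x ⬝ᵥ x) :=
        mul_le_mul_of_nonneg_left hyx hc0
      have e2 : (dmax / (dmax + 1) * lam1 - 1) * (∑ i, y i ^ 2)
          = 1/(dmax+1) * (dmax * lam1 * ∑ i, y i ^ 2) - (∑ i, y i ^ 2) := by
        field_simp
      linarith
    · -- upper bound
      have p1 : (1/(dmax+1)) * (dmin * lam * (∑ i, y i ^ 2))
          ≤ (1/(dmax+1)) * (y ⬝ᵥ (Matrix.diagonal δ - A) *ᵥ y) :=
        mul_le_mul_of_nonneg_left hQl htpos.le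
      have p2 : (1 - dmin / (dmax + 1) * lam) * (∑ i, y i ^ 2) ≤ c * (∑ i, y i ^ 2) :=
        mul_le_mul_of_nonneg_right a1 hyy0
      have p3 : c * (∑ i, y i ^ 2) ≤ c * (x ⬝ᵥ x) :=
        mul_le_mul_of_nonneg_left hyx hc0
      have e1 : (1 - dmin / (dmax + 1) * lam) * (∑ i, y i ^ 2)
          = (∑ i, y i ^ 2) - 1/(dmax+1) * (dmin * lam * (∑ i, y i ^ 2)) := by
        field_simp
      linarith
  -- symmetry of P - F
  have PFsym : (P - uniformMatrix n)ᵀ = P - uniformMatrix n := by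
    have hF : (uniformMatrix n)ᵀ = uniformMatrix n := rfl
    rw [transpose_sub, hP, transpose_sub, transpose_one, transpose_smul, DAsym, hF]
  -- conclude
  rw [sigma2]
  apply Real.sSup_le _ hc0
  rintro r ⟨x, hx1, rfl⟩
  have hbd := opnorm_of_qform _ PFsym c hc0 hq x
  have e2 : ∑ i, x i ^ 2 = x ⬝ᵥ x := by simp [dotProduct, sq]
  have hl2 : l2norm ((P - uniformMatrix n).mulVec x) ≤ c * l2norm x := by
    rw [l2norm, l2norm]
    have e1 : ∑ i, ((P - uniformMatrix n).mulVec x) i ^ 2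
        = ((P - uniformMatrix n) *ᵥ x) ⬝ᵥ ((P - uniformMatrix n) *ᵥ x) := by
      simp [dotProduct, sq]
    rw [e1]
    calc Real.sqrt (((P - uniformMatrix n) *ᵥ x) ⬝ᵥ ((P - uniformMatrix n) *ᵥ x))
        ≤ Real.sqrt (c ^ 2 * (x ⬝ᵥ x)) := Real.sqrt_le_sqrt hbd
      _ = c * Real.sqrt (x ⬝ᵥ x) := by
          rw [Real.sqrt_mul (sq_nonneg c), Real.sqrt_sq hc0]
      _ = c * Real.sqrt (∑ i, x i ^ 2) := by rw [e2]
  calc l2norm ((P - uniformMatrix n).mulVec x) ≤ c * l2norm x := hl2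
    _ ≤ c * 1 := mul_le_mul_of_nonneg_left hx1 hc0
    _ = c := mul_one c
end

section
/- Let {P(t)} be i.i.d. random symmetric doubly stochastic n×n matrices, u(0) ∈ ℝ^n a probability vector, and u(t+1) = P(t) u(t). Then for any ε > 0 and t ≥ 1, ℙ[ ‖u(t) − 𝟙/n‖₂ / ‖u(0)‖₂ ≥ ε ] ≤ ε^{−2} λ₂(𝔼[P(t)ᵀ P(t)])^t, where λ₂ denotes the second largest eigenvalue. -/
open Matrix MeasureTheory ProbabilityTheory

instance {m k : ℕ} : MeasurableSpace (Matrix (Fin m) (Fin k) ℝ) :=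
  inferInstanceAs (MeasurableSpace (Fin m → Fin k → ℝ))

/-- The second largest eigenvalue of a symmetric doubly stochastic matrix,
via the variational characterization over the orthogonal complement of 𝟙. -/
noncomputable def lam2 {n : ℕ} (P : Matrix (Fin n) (Fin n) ℝ) : ℝ :=
  sSup {r | ∃ x : Fin n → ℝ, (∑ i, x i) = 0 ∧ l2norm x = 1 ∧
    r = ∑ i, x i * (P.mulVec x) i}

lemma quad_eq {n : ℕ} (M : Matrix (Fin n) (Fin n) ℝ) (v : Fin n → ℝ) :
    ∑ i, v i * (M.mulVec v) i = ∑ j, ∑ k, (v j * v k) * M j k := by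
  simp only [mulVec, dotProduct, Finset.mul_sum]
  exact Finset.sum_congr rfl fun j _ => Finset.sum_congr rfl fun k _ => by ring

lemma quad_expand {n : ℕ} (A : Matrix (Fin n) (Fin n) ℝ) (v : Fin n → ℝ) :
    ∑ i, (A.mulVec v) i ^ 2 = ∑ j, ∑ k, (v j * v k) * ((Aᵀ * A) j k) := by
  simp only [mulVec, dotProduct, Matrix.mul_apply, transpose_apply, pow_two,
    Finset.sum_mul_sum, Finset.mul_sum, Finset.sum_mul]
  rw [Finset.sum_comm]
  refine Finset.sum_congr rfl fun j _ => ?_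
  rw [Finset.sum_comm]
  exact Finset.sum_congr rfl fun k _ => Finset.sum_congr rfl fun i _ => by ring

lemma lam2_set_bddAbove {n : ℕ} (M : Matrix (Fin n) (Fin n) ℝ) :
    BddAbove {r | ∃ x : Fin n → ℝ, (∑ i, x i) = 0 ∧ l2norm x = 1 ∧
      r = ∑ i, x i * (M.mulVec x) i} := by
  refine ⟨∑ j, ∑ k, |M j k|, fun r hr => ?_⟩
  obtain ⟨x, -, hx1, rfl⟩ := hr
  have hsq : ∑ i, x i ^ 2 = 1 := by
    have h0 : (0:ℝ) ≤ ∑ i, x i ^ 2 := Finset.sum_nonneg fun i _ => sq_nonneg _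
    have := congrArg (· ^ 2) hx1
    simpa [l2norm, Real.sq_sqrt h0] using this
  have hxb : ∀ i, |x i| ≤ 1 := by
    intro i
    have h1 : x i ^ 2 ≤ 1 := hsq ▸ Finset.single_le_sum (f := fun i => x i ^ 2)
      (fun i _ => sq_nonneg _) (Finset.mem_univ i)
    nlinarith [abs_nonneg (x i), sq_abs (x i)]
  rw [quad_eq]
  calc ∑ j, ∑ k, (x j * x k) * M j k ≤ ∑ j, ∑ k, |M j k| := by
        refine Finset.sum_le_sum fun j _ => Finset.sum_le_sum fun k _ => ?_
        calc (x j * x k) * M j k ≤ |(x j * x k) * M j k| := le_abs_self _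
          _ = |x j| * |x k| * |M j k| := by rw [abs_mul, abs_mul]
          _ ≤ 1 * 1 * |M j k| := by
              have := abs_nonneg (M j k)
              gcongr <;> [exact hxb j; exact hxb k]
          _ = |M j k| := by ring

lemma lam2_rayleigh {n : ℕ} (M : Matrix (Fin n) (Fin n) ℝ)
    (v : Fin n → ℝ) (hv : ∑ i, v i = 0) :
    ∑ i, v i * (M.mulVec v) i ≤ lam2 M * ∑ i, v i ^ 2 := by
  by_cases hv0 : v = 0
  · simp [hv0, Matrix.mulVec_zero]
  · set S := ∑ i, v i ^ 2 with hS
    have hS0 : 0 < S := by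
      rcases Function.ne_iff.mp hv0 with ⟨i, hi⟩
      have : 0 < v i ^ 2 := by
        have := sq_abs (v i); nlinarith [abs_pos.mpr hi]
      exact lt_of_lt_of_le this (Finset.single_le_sum (f := fun i => v i ^ 2)
        (fun i _ => sq_nonneg _) (Finset.mem_univ i))
    set c := Real.sqrt S with hc
    have hc0 : 0 < c := Real.sqrt_pos.mpr hS0
    have hc2 : c ^ 2 = S := Real.sq_sqrt hS0.le
    set x : Fin n → ℝ := fun i => c⁻¹ * v i with hx
    have hmem : (∑ i, x i * (M.mulVec x) i) ∈ {r | ∃ x : Fin n → ℝ,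
        (∑ i, x i) = 0 ∧ l2norm x = 1 ∧ r = ∑ i, x i * (M.mulVec x) i} := by
      refine ⟨x, ?_, ?_, rfl⟩
      · simp [hx, ← Finset.mul_sum, hv]
      · have : ∑ i, x i ^ 2 = c⁻¹ ^ 2 * S := by
          simp [hx, mul_pow, ← Finset.mul_sum, hS]
        rw [l2norm, this, ← hc2]
        have : c⁻¹ ^ 2 * c ^ 2 = 1 := by field_simp
        rw [this, Real.sqrt_one]
    have hle := le_csSup (lam2_set_bddAbove M) hmem
    have hxq : ∑ i, x i * (M.mulVec x) i = c⁻¹ ^ 2 * ∑ i, v i * (M.mulVec v) i := by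
      rw [quad_eq, quad_eq, Finset.mul_sum]
      refine Finset.sum_congr rfl fun j _ => ?_
      rw [Finset.mul_sum]
      refine Finset.sum_congr rfl fun k _ => ?_
      simp [hx]; ring
    rw [hxq] at hle
    have h2 : c⁻¹ ^ 2 = S⁻¹ := by rw [← hc2]; simp
    rw [h2] at hle
    calc ∑ i, v i * (M.mulVec v) i = S * (S⁻¹ * ∑ i, v i * (M.mulVec v) i) := by
          field_simp
      _ ≤ S * lam2 M := mul_le_mul_of_nonneg_left hle hS0.le
      _ = lam2 M * S := by ring

lemma measurable_mulVec_comp {α : Type*} [MeasurableSpace α] {n : ℕ}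
    {f : α → Matrix (Fin n) (Fin n) ℝ} {g : α → Fin n → ℝ}
    (hf : Measurable f) (hg : Measurable g) :
    Measurable (fun a => (f a).mulVec (g a)) := by
  rw [measurable_pi_iff]
  intro i
  show Measurable fun a => ∑ j, f a i j * g a j
  exact Finset.measurable_sum _ fun j _ =>
    (((measurable_pi_apply j).comp ((measurable_pi_apply i).comp hf)).mul
      ((measurable_pi_apply j).comp hg))

/-- For i.i.d. random symmetric doubly stochastic matrices `P(t)`,
a probability vector `u(0)` and `u(t+1) = P(t) u(t)`, for any `ε > 0` and `t ≥ 1`,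
`ℙ[ ‖u(t) − 𝟙/n‖₂ / ‖u(0)‖₂ ≥ ε ] ≤ ε^{−2} λ₂(𝔼[P(t)ᵀP(t)])^t`. -/
theorem random_mixing_probability_bound {n : ℕ} (hn : 2 ≤ n)
    {Ω : Type*} [MeasurableSpace Ω] (μ : Measure Ω) [IsProbabilityMeasure μ]
    (P : ℕ → Ω → Matrix (Fin n) (Fin n) ℝ)
    (hmeas : ∀ t, Measurable (P t))
    (hsym : ∀ t ω, (P t ω)ᵀ = P t ω)
    (hnonneg : ∀ t ω i j, 0 ≤ P t ω i j)
    (hrow : ∀ t ω i, ∑ j, P t ω i j = 1)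
    (hcol : ∀ t ω j, ∑ i, P t ω i j = 1)
    (hindep : iIndepFun P μ)
    (hident : ∀ s t : ℕ, IdentDistrib (P s) (P t) μ μ)
    (hint : ∀ i j, Integrable (fun ω => ((P 0 ω)ᵀ * P 0 ω) i j) μ)
    (u0 : Fin n → ℝ) (hu0_nonneg : ∀ i, 0 ≤ u0 i) (hu0_sum : ∑ i, u0 i = 1)
    (u : ℕ → Ω → Fin n → ℝ)
    (hu0 : ∀ ω, u 0 ω = u0)
    (husucc : ∀ t ω, u (t + 1) ω = (P t ω).mulVec (u t ω))
    (M : Matrix (Fin n) (Fin n) ℝ)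
    (hM : ∀ i j, M i j = ∫ ω, ((P 0 ω)ᵀ * P 0 ω) i j ∂μ)
    (ε : ℝ) (hε : 0 < ε) (t : ℕ) (ht : 1 ≤ t) :
    (μ {ω | ε ≤ l2norm (u t ω - fun _ => (1 : ℝ) / n) / l2norm u0}).toReal ≤
      ε⁻¹ ^ 2 * lam2 M ^ t := by
  have hn0 : 0 < n := by omega
  -- basic properties of u
  have hsum : ∀ s ω, ∑ i, u s ω i = 1 := by
    intro s
    induction s with
    | zero => intro ω; rw [hu0]; exact hu0_sum
    | succ s ih =>
      intro ω
      rw [husucc]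
      simp only [mulVec, dotProduct]
      rw [Finset.sum_comm]
      calc ∑ j, ∑ i, P s ω i j * u s ω j
          = ∑ j, (∑ i, P s ω i j) * u s ω j := by
            exact Finset.sum_congr rfl fun j _ => (Finset.sum_mul ..).symm
        _ = ∑ j, u s ω j := by
            refine Finset.sum_congr rfl fun j _ => ?_
            rw [hcol, one_mul]
        _ = 1 := ih ω
  have hpos : ∀ s ω i, 0 ≤ u s ω i := by
    intro s
    induction s with
    | zero => intro ω i; rw [hu0]; exact hu0_nonneg i
    | succ s ih =>
      intro ω i
      rw [husucc]
      show (0:ℝ) ≤ ∑ j, P s ω i j * u s ω j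
      exact Finset.sum_nonneg fun j _ => mul_nonneg (hnonneg s ω i j) (ih ω j)
  have hub : ∀ s ω i, u s ω i ≤ 1 := by
    intro s ω i
    calc u s ω i ≤ ∑ j, u s ω j :=
          Finset.single_le_sum (fun j _ => hpos s ω j) (Finset.mem_univ i)
      _ = 1 := hsum s ω
  have hvb : ∀ s ω i, |u s ω i - 1 / n| ≤ 1 := by
    intro s ω i
    have h1 : (0:ℝ) ≤ 1 / n := by positivity
    have h2 : (1:ℝ) / n ≤ 1 := by
      rw [div_le_one (by exact_mod_cast hn0)]
      exact_mod_cast hn0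
    rw [abs_le]
    constructor <;> nlinarith [hpos s ω i, hub s ω i]
  -- measurability of u
  have humeas : ∀ s, Measurable (u s) := by
    intro s
    induction s with
    | zero =>
      have : u 0 = fun _ => u0 := funext hu0
      rw [this]; exact measurable_const
    | succ s ih =>
      have : u (s+1) = fun ω => (P s ω).mulVec (u s ω) := funext (husucc s)
      rw [this]
      exact measurable_mulVec_comp (hmeas s) ih
  -- v s = centered u
  set v : ℕ → Ω → Fin n → ℝ := fun s ω i => u s ω i - 1 / n with hv
  have hvsum : ∀ s ω, ∑ i, v s ω i = 0 := by
    intro s ω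
    simp only [hv, Finset.sum_sub_distrib, hsum s ω, Finset.sum_const,
      Finset.card_univ, Fintype.card_fin, nsmul_eq_mul]
    field_simp
    simp
  have hvmeas : ∀ s i, Measurable (fun ω => v s ω i) := fun s i =>
    ((measurable_pi_apply i).comp (humeas s)).sub measurable_const
  -- independence of u t from P t
  have hFex : ∀ s : ℕ, ∃ F : ({i // i ∈ Finset.range s} →
      Matrix (Fin n) (Fin n) ℝ) → (Fin n → ℝ),
      Measurable F ∧ ∀ ω, u s ω = F (fun i => P i.1 ω) := by
    intro s
    induction s with
    | zero => exact ⟨fun _ => u0, measurable_const, fun ω => hu0 ω⟩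
    | succ s ih =>
      obtain ⟨F, hFm, hF⟩ := ih
      have hts : s ∈ Finset.range (s+1) := Finset.mem_range.mpr (Nat.lt_succ_self s)
      refine ⟨fun g => (g ⟨s, hts⟩).mulVec (F (fun i =>
        g ⟨i.1, Finset.mem_range.mpr (Nat.lt_succ_of_lt (Finset.mem_range.mp i.2))⟩)),
        ?_, ?_⟩
      · refine measurable_mulVec_comp
          (measurable_pi_apply (⟨s, hts⟩ : {i // i ∈ Finset.range (s+1)}))
          (hFm.comp ?_)
        rw [measurable_pi_iff]; intro i; exact measurable_pi_apply _
      · intro ω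
        rw [husucc s ω, hF ω]
  have hindepUP : ∀ s, IndepFun (u s) (P s) μ := by
    intro s
    have h := hindep.indepFun_finset (Finset.range s) {s}
      (by simp [Finset.disjoint_singleton_right]) hmeas
    obtain ⟨F, hFm, hF⟩ := hFex s
    have h2 := h.comp hFm
      (measurable_pi_apply (⟨s, Finset.mem_singleton_self s⟩ : ({s} : Finset ℕ)))
    have e1 : u s = F ∘ (fun a (i : (Finset.range s : Finset ℕ)) => P i.1 a) :=
      funext hF
    rw [e1]
    exact h2
  -- Q matrices, identical distribution and integrability
  set Q : ℕ → Ω → Matrix (Fin n) (Fin n) ℝ := fun s ω => (P s ω)ᵀ * P s ω with hQ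
  have hψmeas : ∀ j k : Fin n, Measurable (fun A : Matrix (Fin n) (Fin n) ℝ =>
      (Aᵀ * A) j k) := by
    intro j k
    have : (fun A : Matrix (Fin n) (Fin n) ℝ => (Aᵀ * A) j k)
        = fun A => ∑ i, A i j * A i k := by
      funext A; simp [Matrix.mul_apply, transpose_apply]
    rw [this]
    exact Finset.measurable_sum _ fun i _ =>
      ((measurable_pi_apply j).comp (measurable_pi_apply i)).fun_mul
        ((measurable_pi_apply k).comp (measurable_pi_apply i))
  have hQident : ∀ s (j k : Fin n),
      IdentDistrib (fun ω => Q s ω j k) (fun ω => Q 0 ω j k) μ μ := by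
    intro s j k
    exact (hident s 0).comp (hψmeas j k)
  have hQint : ∀ s (j k : Fin n), Integrable (fun ω => Q s ω j k) μ := by
    intro s j k
    exact ((hQident s j k).integrable_iff).mpr (hint j k)
  have hQavg : ∀ s (j k : Fin n), ∫ ω, Q s ω j k ∂μ = M j k := by
    intro s j k
    rw [(hQident s j k).integral_eq, hM]
  have hQmeas : ∀ s (j k : Fin n), Measurable (fun ω => Q s ω j k) :=
    fun s j k => (hψmeas j k).comp (hmeas s)
  -- integrability of the products v_j v_k
  have hvvint : ∀ s (j k : Fin n),
      Integrable (fun ω => v s ω j * v s ω k) μ := by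
    intro s j k
    refine Integrable.mono' (integrable_const 1)
      ((hvmeas s j).mul (hvmeas s k)).aestronglyMeasurable
      (ae_of_all _ fun ω => ?_)
    rw [Real.norm_eq_abs, abs_mul]
    exact mul_le_one₀ (hvb s ω j) (abs_nonneg _) (hvb s ω k)
  have hvvindep : ∀ s (j k : Fin n),
      IndepFun (fun ω => v s ω j * v s ω k) (fun ω => Q s ω j k) μ := by
    intro s j k
    have hφ : Measurable (fun w : Fin n → ℝ => (w j - 1/n) * (w k - 1/n)) :=
      ((measurable_pi_apply j).sub measurable_const).mul
        ((measurable_pi_apply k).sub measurable_const)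
    exact (hindepUP s).comp hφ (hψmeas j k)
  -- integrability of sum of squares
  have hfint : ∀ s, Integrable (fun ω => ∑ i, v s ω i ^ 2) μ :=
    fun s => integrable_finset_sum _ fun i _ => by
      have := hvvint s i i
      simpa [pow_two] using this
  -- the key recursion step
  have hrec : ∀ s ω i, v (s+1) ω i = ((P s ω).mulVec (v s ω)) i := by
    intro s ω i
    simp only [hv, husucc s ω, mulVec, dotProduct, mul_sub, Finset.sum_sub_distrib]
    congr 1
    rw [← Finset.sum_mul, hrow, one_mul]
  have step : ∀ s, (∫ ω, ∑ i, v (s+1) ω i ^ 2 ∂μ) ≤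
      lam2 M * ∫ ω, ∑ i, v s ω i ^ 2 ∂μ := by
    intro s
    have hpt : ∀ ω, ∑ i, v (s+1) ω i ^ 2
        = ∑ j, ∑ k, (v s ω j * v s ω k) * Q s ω j k := by
      intro ω
      have : ∀ i, v (s+1) ω i = ((P s ω).mulVec (v s ω)) i := hrec s ω
      calc ∑ i, v (s+1) ω i ^ 2 = ∑ i, ((P s ω).mulVec (v s ω)) i ^ 2 :=
            Finset.sum_congr rfl fun i _ => by rw [this i]
        _ = ∑ j, ∑ k, (v s ω j * v s ω k) * Q s ω j k := quad_expand _ _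
    have hprod_int : ∀ j k : Fin n,
        Integrable (fun ω => (v s ω j * v s ω k) * Q s ω j k) μ :=
      fun j k => (hvvindep s j k).integrable_mul (hvvint s j k) (hQint s j k)
    calc (∫ ω, ∑ i, v (s+1) ω i ^ 2 ∂μ)
        = ∫ ω, ∑ j, ∑ k, (v s ω j * v s ω k) * Q s ω j k ∂μ := by
          exact integral_congr_ae (ae_of_all _ hpt)
      _ = ∑ j, ∑ k, ∫ ω, (v s ω j * v s ω k) * Q s ω j k ∂μ := by
          rw [integral_finset_sum _ fun j _ =>
            integrable_finset_sum _ fun k _ => hprod_int j k]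
          exact Finset.sum_congr rfl fun j _ =>
            integral_finset_sum _ fun k _ => hprod_int j k
      _ = ∑ j, ∑ k, (∫ ω, v s ω j * v s ω k ∂μ) * M j k := by
          refine Finset.sum_congr rfl fun j _ => Finset.sum_congr rfl fun k _ => ?_
          have h2 : ∫ ω, v s ω j * v s ω k * Q s ω j k ∂μ
              = (∫ ω, v s ω j * v s ω k ∂μ) * (∫ ω, Q s ω j k ∂μ) :=
            (hvvindep s j k).integral_fun_mul_eq_mul_integral (hvvint s j k).1 (hQint s j k).1
          rw [h2, hQavg s j k]
      _ = ∫ ω, ∑ j, ∑ k, (v s ω j * v s ω k) * M j k ∂μ := by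
          rw [integral_finset_sum _ fun j _ =>
            integrable_finset_sum _ fun k _ => (hvvint s j k).mul_const (M j k)]
          refine Finset.sum_congr rfl fun j _ => ?_
          rw [integral_finset_sum _ fun k _ => (hvvint s j k).mul_const (M j k)]
          exact Finset.sum_congr rfl fun k _ => (integral_mul_const _ _).symm
      _ ≤ ∫ ω, lam2 M * ∑ i, v s ω i ^ 2 ∂μ := by
          refine integral_mono ?_ ((hfint s).const_mul _) fun ω => ?_
          · refine integrable_finset_sum _ fun j _ =>
              integrable_finset_sum _ fun k _ => (hvvint s j k).mul_const (M j k)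
          · rw [← quad_eq]
            exact lam2_rayleigh M (v s ω) (hvsum s ω)
      _ = lam2 M * ∫ ω, ∑ i, v s ω i ^ 2 ∂μ := integral_const_mul _ _
  -- nonnegativity of lam2 M
  have hlam0 : 0 ≤ lam2 M := by
    set i0 : Fin n := ⟨0, by omega⟩ with hi0
    set i1 : Fin n := ⟨1, by omega⟩ with hi1
    have hne : i0 ≠ i1 := by simp [hi0, hi1, Fin.ext_iff]
    set s0 : ℝ := (Real.sqrt 2)⁻¹ with hs0def
    set x0 : Fin n → ℝ := fun i =>
      s0 * ((Pi.single i0 1 : Fin n → ℝ) i - (Pi.single i1 1 : Fin n → ℝ) i) with hx0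
    have hs0 : s0 ^ 2 = 2⁻¹ := by
      rw [hs0def, inv_pow, Real.sq_sqrt (by norm_num : (0:ℝ) ≤ 2)]
    have hsum0 : ∑ i, x0 i = 0 := by
      simp only [hx0, ← Finset.mul_sum, Finset.sum_sub_distrib,
        Finset.sum_pi_single']
      simp
    have key : ∀ i, ((Pi.single i0 1 : Fin n → ℝ) i - (Pi.single i1 1 : Fin n → ℝ) i) ^ 2
        = (Pi.single i0 1 : Fin n → ℝ) i + (Pi.single i1 1 : Fin n → ℝ) i := by
      intro i
      simp only [Pi.single_apply]
      split_ifs with h1 h2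
      · exact absurd (h1.symm.trans h2) hne
      · norm_num
      · norm_num
      · norm_num
    have hsq0 : ∑ i, x0 i ^ 2 = 1 := by
      calc ∑ i, x0 i ^ 2
          = ∑ i, s0 ^ 2 * ((Pi.single i0 1 : Fin n → ℝ) i + (Pi.single i1 1 : Fin n → ℝ) i) := by
            refine Finset.sum_congr rfl fun i _ => ?_
            rw [hx0, mul_pow, key i]
        _ = s0 ^ 2 * ∑ i, ((Pi.single i0 1 : Fin n → ℝ) i + (Pi.single i1 1 : Fin n → ℝ) i) := by
            rw [Finset.mul_sum]
        _ = 1 := by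
            rw [Finset.sum_add_distrib, Finset.sum_pi_single', Finset.sum_pi_single']
            simp [hs0]; norm_num
    have hl2 : l2norm x0 = 1 := by rw [l2norm, hsq0, Real.sqrt_one]
    set r0 := ∑ i, x0 i * (M.mulVec x0) i with hr0
    have hmem : r0 ∈ {r | ∃ x : Fin n → ℝ, (∑ i, x i) = 0 ∧ l2norm x = 1 ∧
        r = ∑ i, x i * (M.mulVec x) i} := ⟨x0, hsum0, hl2, rfl⟩
    have hr0eq : r0 = ∫ ω, ∑ i, ((P 0 ω).mulVec x0) i ^ 2 ∂μ := by
      rw [hr0, quad_eq]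
      calc ∑ j, ∑ k, (x0 j * x0 k) * M j k
          = ∑ j, ∑ k, ∫ ω, (x0 j * x0 k) * Q 0 ω j k ∂μ := by
            refine Finset.sum_congr rfl fun j _ => Finset.sum_congr rfl fun k _ => ?_
            rw [integral_const_mul, hQavg 0 j k]
        _ = ∫ ω, ∑ j, ∑ k, (x0 j * x0 k) * Q 0 ω j k ∂μ := by
            rw [integral_finset_sum _ fun j _ =>
              integrable_finset_sum _ fun k _ => (hQint 0 j k).const_mul _]
            refine Finset.sum_congr rfl fun j _ => ?_
            rw [integral_finset_sum _ fun k _ => (hQint 0 j k).const_mul _]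
        _ = ∫ ω, ∑ i, ((P 0 ω).mulVec x0) i ^ 2 ∂μ :=
            integral_congr_ae (ae_of_all _ fun ω => (quad_expand _ _).symm)
    have hr0nonneg : 0 ≤ r0 := by
      rw [hr0eq]
      exact integral_nonneg fun ω => Finset.sum_nonneg fun i _ => sq_nonneg _
    exact le_trans hr0nonneg (le_csSup (lam2_set_bddAbove M) hmem)
  -- iterate the recursion
  set g : ℕ → ℝ := fun s => ∫ ω, ∑ i, v s ω i ^ 2 ∂μ with hg
  have hgbound : ∀ s, g s ≤ lam2 M ^ s * g 0 := by
    intro s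
    induction s with
    | zero => simp
    | succ s ih =>
      calc g (s+1) ≤ lam2 M * g s := step s
        _ ≤ lam2 M * (lam2 M ^ s * g 0) := mul_le_mul_of_nonneg_left ih hlam0
        _ = lam2 M ^ (s+1) * g 0 := by ring
  set S0 : ℝ := ∑ i, u0 i ^ 2 with hS0def
  have hg0 : g 0 = ∑ i, (u0 i - 1/n) ^ 2 := by
    rw [hg]
    simp only [hv, hu0]
    rw [integral_const]
    simp
  have hg0le : g 0 ≤ S0 := by
    rw [hg0, hS0def]
    have hterm : ∀ i : Fin n, (u0 i - 1/n)^2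
        = u0 i ^ 2 - (2/n) * u0 i + (1/n)^2 := fun i => by ring
    rw [Finset.sum_congr rfl fun i _ => hterm i, Finset.sum_add_distrib,
      Finset.sum_sub_distrib, ← Finset.mul_sum, hu0_sum, Finset.sum_const,
      Finset.card_univ, Fintype.card_fin, nsmul_eq_mul]
    have hnr : (0:ℝ) < n := by exact_mod_cast hn0
    have h1 : (n:ℝ) * (1/n)^2 = 1/n := by
      field_simp
    have h3 : (0:ℝ) ≤ 1/n := by positivity
    have h5 : (2:ℝ)/n = 2*(1/n) := by ring
    linarith
  -- Markov / Chebyshev assembly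
  have hS0pos : 0 < S0 := by
    have hex : ∃ i, u0 i ≠ 0 := by
      by_contra h
      push_neg at h
      simp [h] at hu0_sum
    obtain ⟨i, hi⟩ := hex
    have h1 : 0 < u0 i ^ 2 := by positivity
    exact lt_of_lt_of_le h1 (Finset.single_le_sum (f := fun i => u0 i ^ 2)
      (fun _ _ => sq_nonneg _) (Finset.mem_univ i))
  have hcpos : 0 < l2norm u0 := Real.sqrt_pos.mpr hS0pos
  have hincl : {ω | ε ≤ l2norm (u t ω - fun _ => (1 : ℝ) / n) / l2norm u0} ⊆
      {ω | ε ^ 2 * S0 ≤ ∑ i, v t ω i ^ 2} := by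
    intro ω hω
    simp only [Set.mem_setOf_eq] at hω ⊢
    have h1 : ε * l2norm u0 ≤ l2norm (u t ω - fun _ => (1 : ℝ) / n) :=
      (le_div_iff₀ hcpos).mp hω
    have h2 : l2norm (u t ω - fun _ => (1 : ℝ) / n)
        = Real.sqrt (∑ i, v t ω i ^ 2) := rfl
    rw [h2] at h1
    have h3 : (ε * l2norm u0) ^ 2 ≤ (Real.sqrt (∑ i, v t ω i ^ 2)) ^ 2 :=
      pow_le_pow_left₀ (mul_nonneg hε.le hcpos.le) h1 2
    have h4 : (Real.sqrt (∑ i, v t ω i ^ 2)) ^ 2 = ∑ i, v t ω i ^ 2 :=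
      Real.sq_sqrt (Finset.sum_nonneg fun i _ => sq_nonneg _)
    have h5 : (l2norm u0) ^ 2 = S0 := Real.sq_sqrt
      (Finset.sum_nonneg fun i _ => sq_nonneg _)
    calc ε ^ 2 * S0 = (ε * l2norm u0) ^ 2 := by rw [mul_pow, h5]
      _ ≤ ∑ i, v t ω i ^ 2 := h4 ▸ h3
  have markov := mul_meas_ge_le_integral_of_nonneg
    (ae_of_all μ fun ω => Finset.sum_nonneg fun i _ => sq_nonneg (v t ω i))
    (hfint t) (ε ^ 2 * S0)
  have hmono : (μ {ω | ε ≤ l2norm (u t ω - fun _ => (1 : ℝ) / n) / l2norm u0}).toReal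
      ≤ (μ {ω | ε ^ 2 * S0 ≤ ∑ i, v t ω i ^ 2}).toReal :=
    ENNReal.toReal_mono (measure_ne_top μ _) (measure_mono hincl)
  have hfinal : (ε ^ 2 * S0) * (μ {ω | ε ^ 2 * S0 ≤ ∑ i, v t ω i ^ 2}).toReal
      ≤ lam2 M ^ t * S0 := by
    refine le_trans markov (le_trans (hgbound t) ?_)
    exact mul_le_mul_of_nonneg_left hg0le (pow_nonneg hlam0 t)
  have hpos2 : 0 < ε ^ 2 * S0 := by positivity
  calc (μ {ω | ε ≤ l2norm (u t ω - fun _ => (1 : ℝ) / n) / l2norm u0}).toReal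
      ≤ (μ {ω | ε ^ 2 * S0 ≤ ∑ i, v t ω i ^ 2}).toReal := hmono
    _ ≤ (lam2 M ^ t * S0) / (ε ^ 2 * S0) := by
        rw [le_div_iff₀ hpos2]
        linarith [hfinal]
    _ = ε⁻¹ ^ 2 * lam2 M ^ t := by
        rw [mul_comm (ε^2) S0, mul_comm (lam2 M ^ t) S0,
          mul_div_mul_left _ _ (ne_of_gt hS0pos)]
        rw [div_eq_mul_inv, mul_comm, inv_pow]
end

section
/- Let G be an undirected graph with Cheeger constant h_G = min_{S ⊆ V} |E(S, S^c)| / min{vol(S), vol(S^c)} and normalized Laplacian L with second smallest eigenvalue λ_{n−1}(L). Then 2 h_G ≥ λ_{n−1}(L) > h_G² / 2. -/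
open Matrix Finset


private lemma colsum {n : ℕ} {A : Matrix (Fin n) (Fin n) ℝ} {δ : Fin n → ℝ}
    (hAsymm : ∀ i j, A i j = A j i) (hrow : ∀ i, ∑ j, A i j = δ i) (j : Fin n) :
    ∑ i, A i j = δ j := by
  rw [← hrow j]; exact Finset.sum_congr rfl fun i _ => hAsymm i j

private lemma sum_expand_sq {n : ℕ} {A : Matrix (Fin n) (Fin n) ℝ} {δ : Fin n → ℝ}
    (hAsymm : ∀ i j, A i j = A j i) (hrow : ∀ i, ∑ j, A i j = δ i)
    (g : Fin n → ℝ) (ε : ℝ) :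
    ∑ i, ∑ j, A i j * (g i + ε * g j) ^ 2
      = (1 + ε ^ 2) * (∑ i, δ i * g i ^ 2) + 2 * ε * ∑ i, ∑ j, A i j * (g i * g j) := by
  have e1 : ∀ i j, A i j * (g i + ε * g j) ^ 2
      = A i j * g i ^ 2 + ε ^ 2 * (A i j * g j ^ 2) + 2 * ε * (A i j * (g i * g j)) := by
    intro i j; ring
  simp only [e1, Finset.sum_add_distrib, ← Finset.mul_sum]
  have e2 : ∑ i, ∑ j, A i j * g i ^ 2 = ∑ i, δ i * g i ^ 2 := by
    refine Finset.sum_congr rfl fun i _ => ?_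
    rw [← Finset.sum_mul, hrow i, mul_comm]
  have e3 : ∑ i, ∑ j, A i j * g j ^ 2 = ∑ i, δ i * g i ^ 2 := by
    rw [Finset.sum_comm]
    refine Finset.sum_congr rfl fun j _ => ?_
    rw [← Finset.sum_mul, colsum hAsymm hrow j, mul_comm]
  rw [e2, e3]; ring

private lemma cut_swap {n : ℕ} {A : Matrix (Fin n) (Fin n) ℝ}
    (hAsymm : ∀ i j, A i j = A j i) (S : Finset (Fin n)) :
    ∑ i ∈ Sᶜ, ∑ j ∈ S, A i j = ∑ i ∈ S, ∑ j ∈ Sᶜ, A i j := by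
  refine Finset.sum_comm.trans ?_
  exact Finset.sum_congr rfl fun i _ => Finset.sum_congr rfl fun j _ => hAsymm j i


private lemma coarea {n : ℕ} (A : Matrix (Fin n) (Fin n) ℝ) (δ : Fin n → ℝ) (h : ℝ)
    (hAsymm : ∀ i j, A i j = A j i) :
    ∀ N : ℕ, ∀ u : Fin n → ℝ, (∀ i, 0 ≤ u i) →
      (Finset.univ.filter (fun i => 0 < u i)).card ≤ N →
      (∀ S : Finset (Fin n), S.Nonempty → (∀ i ∈ S, 0 < u i) →
        h * ∑ i ∈ S, δ i ≤ ∑ i ∈ S, ∑ j ∈ Sᶜ, A i j) →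
      2 * (h * ∑ i, δ i * u i) ≤ ∑ i, ∑ j, A i j * |u i - u j| := by
  intro N
  induction N with
  | zero =>
    intro u hu hcard _
    have hz : ∀ i, u i = 0 := by
      intro i
      by_contra hne
      have hmem : i ∈ Finset.univ.filter (fun i => 0 < u i) := by
        simp [lt_of_le_of_ne (hu i) (Ne.symm hne)]
      have := Finset.card_pos.mpr ⟨i, hmem⟩
      omega
    simp [hz]
  | succ N ih =>
    intro u hu hcard hcut
    set P := Finset.univ.filter (fun i => 0 < u i) with hP
    by_cases hPne : P.Nonempty
    · obtain ⟨i₀, hi₀P, hi₀min⟩ := Finset.exists_min_image P u hPne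
      set c := u i₀ with hc
      have hc0 : 0 < c := (Finset.mem_filter.mp hi₀P).2
      have hcle : ∀ k, 0 < u k → c ≤ u k := by
        intro k hk; exact hi₀min k (by simp [hP, hk])
      have hzero : ∀ k, ¬ 0 < u k → u k = 0 := fun k hk =>
        le_antisymm (not_lt.mp hk) (hu k)
      set u' := fun i => if 0 < u i then u i - c else 0 with hu'def
      have hu'pos : ∀ k, 0 < u k → u' k = u k - c := by
        intro k hk; simp only [hu'def]; rw [if_pos hk]
      have hu'zero : ∀ k, ¬ 0 < u k → u' k = 0 := by
        intro k hk; simp only [hu'def]; rw [if_neg hk]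
      have hu' : ∀ i, 0 ≤ u' i := by
        intro i
        by_cases hi : 0 < u i
        · rw [hu'pos i hi]; linarith [hcle i hi]
        · rw [hu'zero i hi]
      have hu'of : ∀ k, 0 < u' k → 0 < u k := by
        intro k hk
        by_contra hku
        rw [hu'zero k hku] at hk; exact absurd hk (lt_irrefl 0)
      have hsub : Finset.univ.filter (fun i => 0 < u' i) ⊆ P.erase i₀ := by
        intro i hi
        simp only [Finset.mem_filter, Finset.mem_univ, true_and] at hi
        have hiu : 0 < u i := hu'of i hi
        refine Finset.mem_erase.mpr ⟨?_, by simp [hP, hiu]⟩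
        rintro rfl
        rw [hu'pos i hiu] at hi
        simp only [← hc] at hi
        linarith
      have hcard' : (Finset.univ.filter (fun i => 0 < u' i)).card ≤ N := by
        have h1 := Finset.card_le_card hsub
        have h2 : (P.erase i₀).card = P.card - 1 := Finset.card_erase_of_mem hi₀P
        have h3 : 0 < P.card := Finset.card_pos.mpr hPne
        omega
      have hcut' : ∀ S : Finset (Fin n), S.Nonempty → (∀ i ∈ S, 0 < u' i) →
          h * ∑ i ∈ S, δ i ≤ ∑ i ∈ S, ∑ j ∈ Sᶜ, A i j :=
        fun S hS hSpos => hcut S hS fun i hi => hu'of i (hSpos i hi)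
      have ihu' := ih u' hu' hcard' hcut'
      set χ := fun i => if 0 < u i then (1:ℝ) else 0 with hχ
      have hχpos : ∀ k, 0 < u k → χ k = 1 := by
        intro k hk; simp only [hχ]; rw [if_pos hk]
      have hχzero : ∀ k, ¬ 0 < u k → χ k = 0 := by
        intro k hk; simp only [hχ]; rw [if_neg hk]
      have key : ∀ i j, |u i - u j| = c * |χ i - χ j| + |u' i - u' j| := by
        intro i j
        by_cases hi : 0 < u i <;> by_cases hj : 0 < u j
        · rw [hχpos i hi, hχpos j hj, hu'pos i hi, hu'pos j hj]
          rw [sub_self, abs_zero, mul_zero, zero_add]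
          congr 1; ring
        · rw [hχpos i hi, hχzero j hj, hu'pos i hi, hu'zero j hj, hzero j hj]
          rw [sub_zero, sub_zero, sub_zero, abs_one, mul_one, abs_of_pos hi,
            abs_of_nonneg (by linarith [hcle i hi])]
          ring
        · rw [hχzero i hi, hχpos j hj, hu'zero i hi, hu'pos j hj, hzero i hi]
          rw [zero_sub, zero_sub, zero_sub, abs_neg, abs_neg, abs_neg, abs_one, mul_one,
            abs_of_pos hj, abs_of_nonneg (by linarith [hcle j hj])]
          ring
        · rw [hχzero i hi, hχzero j hj, hu'zero i hi, hu'zero j hj, hzero i hi, hzero j hj]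
          simp
      have hmulout : ∀ (S T : Finset (Fin n)), ∑ i ∈ S, ∑ j ∈ T, A i j * c
          = (∑ i ∈ S, ∑ j ∈ T, A i j) * c := by
        intro S T
        rw [Finset.sum_mul]
        exact Finset.sum_congr rfl fun i _ => (Finset.sum_mul _ _ _).symm
      have hbd : ∑ i, ∑ j, A i j * (c * |χ i - χ j|) = 2 * c * ∑ i ∈ P, ∑ j ∈ Pᶜ, A i j := by
        have hsplit : ∀ F : Fin n → ℝ, ∑ i, F i = ∑ i ∈ P, F i + ∑ i ∈ Pᶜ, F i := by
          intro F; rw [Finset.sum_add_sum_compl]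
        have hχP : ∀ i ∈ P, χ i = 1 := fun i hi => hχpos i (Finset.mem_filter.mp hi).2
        have hχPc : ∀ i ∈ Pᶜ, χ i = 0 := by
          intro i hi
          have hni := Finset.mem_compl.mp hi
          simp only [hP, Finset.mem_filter, Finset.mem_univ, true_and] at hni
          exact hχzero i hni
        calc ∑ i, ∑ j, A i j * (c * |χ i - χ j|)
            = ∑ i ∈ P, (∑ j ∈ P, A i j * (c * |χ i - χ j|) + ∑ j ∈ Pᶜ, A i j * (c * |χ i - χ j|))
              + ∑ i ∈ Pᶜ, (∑ j ∈ P, A i j * (c * |χ i - χ j|) + ∑ j ∈ Pᶜ, A i j * (c * |χ i - χ j|)) := by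
              rw [hsplit]; congr 1 <;> exact Finset.sum_congr rfl fun i _ => hsplit _
          _ = ∑ i ∈ P, ∑ j ∈ Pᶜ, A i j * c + ∑ i ∈ Pᶜ, ∑ j ∈ P, A i j * c := by
              rw [Finset.sum_add_distrib, Finset.sum_add_distrib]
              have z1 : ∑ i ∈ P, ∑ j ∈ P, A i j * (c * |χ i - χ j|) = 0 := by
                refine Finset.sum_eq_zero fun i hi => Finset.sum_eq_zero fun j hj => ?_
                rw [hχP i hi, hχP j hj]; simp
              have z2 : ∑ i ∈ Pᶜ, ∑ j ∈ Pᶜ, A i j * (c * |χ i - χ j|) = 0 := by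
                refine Finset.sum_eq_zero fun i hi => Finset.sum_eq_zero fun j hj => ?_
                rw [hχPc i hi, hχPc j hj]; simp
              rw [z1, z2]
              have e1 : ∑ i ∈ P, ∑ j ∈ Pᶜ, A i j * (c * |χ i - χ j|) = ∑ i ∈ P, ∑ j ∈ Pᶜ, A i j * c := by
                refine Finset.sum_congr rfl fun i hi => Finset.sum_congr rfl fun j hj => ?_
                rw [hχP i hi, hχPc j hj]; norm_num
              have e2 : ∑ i ∈ Pᶜ, ∑ j ∈ P, A i j * (c * |χ i - χ j|) = ∑ i ∈ Pᶜ, ∑ j ∈ P, A i j * c := by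
                refine Finset.sum_congr rfl fun i hi => Finset.sum_congr rfl fun j hj => ?_
                rw [hχPc i hi, hχP j hj]; norm_num
              rw [e1, e2]; ring
          _ = 2 * c * ∑ i ∈ P, ∑ j ∈ Pᶜ, A i j := by
              rw [hmulout, hmulout]
              have hswap : ∑ i ∈ Pᶜ, ∑ j ∈ P, A i j = ∑ i ∈ P, ∑ j ∈ Pᶜ, A i j := by
                refine Finset.sum_comm.trans ?_
                exact Finset.sum_congr rfl fun i _ => Finset.sum_congr rfl fun j _ => hAsymm j i
              rw [hswap]; ring
      have hvol : ∑ i, δ i * u i = c * ∑ i ∈ P, δ i + ∑ i, δ i * u' i := by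
        have hpt : ∀ i, δ i * u i = c * (if i ∈ P then δ i else 0) + δ i * u' i := by
          intro i
          by_cases hi : 0 < u i
          · have hiP : i ∈ P := by simp [hP, hi]
            rw [hu'pos i hi, if_pos hiP]; ring
          · have hiP : i ∉ P := by simp [hP, hi]
            rw [hu'zero i hi, hzero i hi, if_neg hiP]; ring
        rw [Finset.sum_congr rfl fun i _ => hpt i, Finset.sum_add_distrib, ← Finset.mul_sum,
          Finset.sum_ite_mem, Finset.univ_inter]
      have hPpos : ∀ i ∈ P, 0 < u i := fun i hi => (Finset.mem_filter.mp hi).2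
      have hcutP := hcut P hPne hPpos
      calc 2 * (h * ∑ i, δ i * u i)
          = 2 * c * (h * ∑ i ∈ P, δ i) + 2 * (h * ∑ i, δ i * u' i) := by rw [hvol]; ring
        _ ≤ 2 * c * ∑ i ∈ P, ∑ j ∈ Pᶜ, A i j + ∑ i, ∑ j, A i j * |u' i - u' j| := by
            have hm := mul_le_mul_of_nonneg_left hcutP (by linarith : (0:ℝ) ≤ 2 * c)
            have : 2 * c * (h * ∑ i ∈ P, δ i) = 2 * c * (h * ∑ i ∈ P, δ i) := rfl
            nlinarith [ihu']
        _ = ∑ i, ∑ j, A i j * |u i - u j| := by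
            rw [← hbd, ← Finset.sum_add_distrib]
            refine Finset.sum_congr rfl fun i _ => ?_
            rw [← Finset.sum_add_distrib]
            refine Finset.sum_congr rfl fun j _ => ?_
            rw [key i j]; ring
    · have hz : ∀ i, u i = 0 := by
        intro i
        by_contra hne
        exact hPne ⟨i, by simp [hP, lt_of_le_of_ne (hu i) (Ne.symm hne)]⟩
      simp [hz]

private lemma cheeger_hard {n : ℕ} (A : Matrix (Fin n) (Fin n) ℝ) (δ : Fin n → ℝ)
    (hAsymm : ∀ i j, A i j = A j i) (hAnn : ∀ i j, 0 ≤ A i j)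
    (hrow : ∀ i, ∑ j, A i j = δ i) (hδpos : ∀ i, 0 < δ i)
    (h lam : ℝ) (hh : 0 < h)
    (f : Fin n → ℝ) (hfpos : ∃ i, 0 < f i)
    (hcut : ∀ S : Finset (Fin n), S.Nonempty → (∀ i ∈ S, 0 < f i) →
        h * ∑ i ∈ S, δ i ≤ ∑ i ∈ S, ∑ j ∈ Sᶜ, A i j)
    (heig : ∀ i, ∑ j, A i j * (f i - f j) = lam * (δ i * f i)) :
    h ^ 2 / 2 < lam := by
  classical
  set g := fun i => max (f i) 0 with hgdef
  have hgnn : ∀ i, 0 ≤ g i := fun i => le_max_right _ _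
  have hgeq : ∀ i, 0 < f i → g i = f i := fun i hi => max_eq_left hi.le
  have hg0 : ∀ i, ¬ 0 < f i → g i = 0 := fun i hi => max_eq_right (not_lt.mp hi)
  have hfleg : ∀ i, f i ≤ g i := fun i => le_max_left _ _
  set P := Finset.univ.filter (fun i => 0 < f i) with hP
  set D2 := ∑ i, δ i * g i ^ 2 with hD2
  set Q := ∑ i, ∑ j, A i j * (g i * g j) with hQ
  set W2 := D2 - Q with hW2def
  -- D2 > 0
  obtain ⟨i₀, hi₀⟩ := hfpos
  have hD2pos : 0 < D2 := by
    have hgpos : 0 < g i₀ := by rw [hgeq i₀ hi₀]; exact hi₀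
    have hterm : 0 < δ i₀ * g i₀ ^ 2 := mul_pos (hδpos i₀) (pow_pos hgpos 2)
    have hle : δ i₀ * g i₀ ^ 2 ≤ ∑ i, δ i * g i ^ 2 := by
      exact Finset.single_le_sum (f := fun i => δ i * g i ^ 2)
        (fun i _ => mul_nonneg (hδpos i).le (sq_nonneg _)) (Finset.mem_univ i₀)
    rw [hD2]; linarith
  -- step 1 : W2 ≤ lam * D2
  have step1 : W2 ≤ lam * D2 := by
    have hlamD2 : lam * D2 = ∑ i ∈ P, (∑ j, A i j * (f i - f j)) * f i := by
      have e1 : lam * D2 = ∑ i, lam * (δ i * g i ^ 2) := by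
        rw [Finset.mul_sum]
      rw [e1]
      rw [← Finset.sum_subset (Finset.subset_univ P) (fun i _ hiP => ?_)]
      · refine Finset.sum_congr rfl fun i hi => ?_
        have hif : 0 < f i := (Finset.mem_filter.mp hi).2
        rw [heig i, hgeq i hif]; ring
      · have hif : ¬ 0 < f i := by
          intro hc; exact hiP (by simp [hP, hc])
        rw [hg0 i hif]; ring
    have hiden : ∑ i, ∑ j, A i j * (g i * (g i - g j)) = W2 := by
      have e : ∀ i j, A i j * (g i * (g i - g j)) = A i j * g i ^ 2 - A i j * (g i * g j) := by
        intro i j; ring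
      simp only [e, Finset.sum_sub_distrib]
      have e2 : ∑ i, ∑ j, A i j * g i ^ 2 = D2 := by
        refine Finset.sum_congr rfl fun i _ => ?_
        rw [← Finset.sum_mul, hrow i, mul_comm]
      rw [e2, hW2def, hQ]
    rw [hlamD2, ← hiden]
    have hdrop : ∑ i, ∑ j, A i j * (g i * (g i - g j))
        = ∑ i ∈ P, ∑ j, A i j * (g i * (g i - g j)) := by
      rw [← Finset.sum_subset (Finset.subset_univ P) (fun i _ hiP => ?_)]
      have hif : ¬ 0 < f i := by intro hc; exact hiP (by simp [hP, hc])
      refine Finset.sum_eq_zero fun j _ => ?_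
      rw [hg0 i hif]; ring
    rw [hdrop]
    refine Finset.sum_le_sum fun i hi => ?_
    have hif : 0 < f i := (Finset.mem_filter.mp hi).2
    rw [Finset.sum_mul]
    refine Finset.sum_le_sum fun j _ => ?_
    have h1 : g i = f i := hgeq i hif
    have h2 : g i - g j ≤ f i - f j := by
      have := hfleg j; rw [h1]; linarith
    calc A i j * (g i * (g i - g j)) = (A i j * g i) * (g i - g j) := by ring
      _ ≤ (A i j * g i) * (f i - f j) := by
          refine mul_le_mul_of_nonneg_left h2 ?_
          have := hgnn i; have := hAnn i j; positivity
      _ = A i j * (f i - f j) * f i := by rw [h1]; ring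
  -- Cauchy-Schwarz
  have hdiff : ∑ i, ∑ j, A i j * (g i - g j) ^ 2 = 2 * W2 := by
    have := sum_expand_sq hAsymm hrow g (-1)
    have e : ∀ i j, A i j * (g i + (-1) * g j) ^ 2 = A i j * (g i - g j) ^ 2 := by
      intro i j; ring
    simp only [e] at this
    rw [this, hW2def, hD2, hQ]; ring
  have hsum : ∑ i, ∑ j, A i j * (g i + g j) ^ 2 = 4 * D2 - 2 * W2 := by
    have := sum_expand_sq hAsymm hrow g 1
    have e : ∀ i j, A i j * (g i + 1 * g j) ^ 2 = A i j * (g i + g j) ^ 2 := by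
      intro i j; ring
    simp only [e] at this
    rw [this, hW2def, hD2, hQ]; ring
  have hCS : (∑ i, ∑ j, A i j * |g i ^ 2 - g j ^ 2|) ^ 2 ≤ (2 * W2) * (4 * D2 - 2 * W2) := by
    have key := Finset.sum_mul_sq_le_sq_mul_sq Finset.univ
      (fun p : Fin n × Fin n => Real.sqrt (A p.1 p.2) * |g p.1 - g p.2|)
      (fun p : Fin n × Fin n => Real.sqrt (A p.1 p.2) * (g p.1 + g p.2))
    have e1 : ∀ p : Fin n × Fin n,
        (Real.sqrt (A p.1 p.2) * |g p.1 - g p.2|) * (Real.sqrt (A p.1 p.2) * (g p.1 + g p.2))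
          = A p.1 p.2 * |g p.1 ^ 2 - g p.2 ^ 2| := by
      intro p
      have hs : Real.sqrt (A p.1 p.2) * Real.sqrt (A p.1 p.2) = A p.1 p.2 :=
        Real.mul_self_sqrt (hAnn _ _)
      have habs : |g p.1 - g p.2| * (g p.1 + g p.2) = |g p.1 ^ 2 - g p.2 ^ 2| := by
        rw [show g p.1 ^ 2 - g p.2 ^ 2 = (g p.1 - g p.2) * (g p.1 + g p.2) by ring, abs_mul,
          abs_of_nonneg (by linarith [hgnn p.1, hgnn p.2] : (0:ℝ) ≤ g p.1 + g p.2)]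
      calc (Real.sqrt (A p.1 p.2) * |g p.1 - g p.2|) * (Real.sqrt (A p.1 p.2) * (g p.1 + g p.2))
          = (Real.sqrt (A p.1 p.2) * Real.sqrt (A p.1 p.2)) * (|g p.1 - g p.2| * (g p.1 + g p.2)) := by ring
        _ = A p.1 p.2 * |g p.1 ^ 2 - g p.2 ^ 2| := by rw [hs, habs]
    have e2 : ∀ p : Fin n × Fin n,
        (Real.sqrt (A p.1 p.2) * |g p.1 - g p.2|) ^ 2 = A p.1 p.2 * (g p.1 - g p.2) ^ 2 := by
      intro p
      rw [mul_pow, Real.sq_sqrt (hAnn _ _), sq_abs]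
    have e3 : ∀ p : Fin n × Fin n,
        (Real.sqrt (A p.1 p.2) * (g p.1 + g p.2)) ^ 2 = A p.1 p.2 * (g p.1 + g p.2) ^ 2 := by
      intro p
      rw [mul_pow, Real.sq_sqrt (hAnn _ _)]
    simp only [e1, e2, e3] at key
    have c1 : ∑ p : Fin n × Fin n, A p.1 p.2 * |g p.1 ^ 2 - g p.2 ^ 2|
        = ∑ i, ∑ j, A i j * |g i ^ 2 - g j ^ 2| := by
      rw [← Finset.univ_product_univ, Finset.sum_product]
    have c2 : ∑ p : Fin n × Fin n, A p.1 p.2 * (g p.1 - g p.2) ^ 2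
        = ∑ i, ∑ j, A i j * (g i - g j) ^ 2 := by
      rw [← Finset.univ_product_univ, Finset.sum_product]
    have c3 : ∑ p : Fin n × Fin n, A p.1 p.2 * (g p.1 + g p.2) ^ 2
        = ∑ i, ∑ j, A i j * (g i + g j) ^ 2 := by
      rw [← Finset.univ_product_univ, Finset.sum_product]
    rw [c1, c2, c3, hdiff, hsum] at key
    exact key
  -- coarea application
  have hco : 2 * (h * D2) ≤ ∑ i, ∑ j, A i j * |g i ^ 2 - g j ^ 2| := by
    have happ := coarea A δ h hAsymm
      ((Finset.univ.filter (fun i => 0 < g i ^ 2)).card)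
      (fun i => g i ^ 2) (fun i => sq_nonneg _) le_rfl ?_
    · have e : ∑ i, δ i * g i ^ 2 = D2 := rfl
      calc 2 * (h * D2) = 2 * (h * ∑ i, δ i * g i ^ 2) := rfl
        _ ≤ _ := happ
    · intro S hS hSpos
      refine hcut S hS fun i hi => ?_
      have hgi : 0 < g i ^ 2 := hSpos i hi
      by_contra hif
      rw [hg0 i hif] at hgi
      simp at hgi
  -- combine
  have hW2nn : 0 ≤ 4 * D2 - 2 * W2 := by
    rw [← hsum]
    refine Finset.sum_nonneg fun i _ => Finset.sum_nonneg fun j _ => ?_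
    have := hAnn i j; positivity
  have hkey : h ^ 2 * D2 ^ 2 ≤ W2 * (2 * D2 - W2) := by
    have h1 : (2 * (h * D2)) ^ 2 ≤ (∑ i, ∑ j, A i j * |g i ^ 2 - g j ^ 2|) ^ 2 := by
      refine pow_le_pow_left₀ ?_ hco 2
      positivity
    nlinarith [hCS]
  set α := W2 / D2 with hα
  have hW2eq : W2 = α * D2 := by
    rw [hα]; field_simp
  have hα2 : h ^ 2 ≤ α * (2 - α) := by
    rw [hW2eq] at hkey
    have h2 : h ^ 2 * D2 ^ 2 ≤ (α * (2 - α)) * D2 ^ 2 := by nlinarith [hkey]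
    exact le_of_mul_le_mul_right h2 (pow_pos hD2pos 2)
  have hsq : (1 - α) ^ 2 ≤ 1 - h ^ 2 := by nlinarith
  have hh2le1 : h ^ 2 ≤ 1 := by nlinarith [sq_nonneg (1 - α)]
  have hαlb : 1 - Real.sqrt (1 - h ^ 2) ≤ α := by
    have h1 : 1 - α ≤ |1 - α| := le_abs_self _
    have h2 : |1 - α| = Real.sqrt ((1 - α) ^ 2) := (Real.sqrt_sq_eq_abs _).symm
    have h3 : Real.sqrt ((1 - α) ^ 2) ≤ Real.sqrt (1 - h ^ 2) := Real.sqrt_le_sqrt hsq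
    linarith
  have hstrict : Real.sqrt (1 - h ^ 2) < 1 - h ^ 2 / 2 := by
    have h1 : (1 : ℝ) - h ^ 2 < (1 - h ^ 2 / 2) ^ 2 := by nlinarith [pow_pos hh 4]
    have h2 : Real.sqrt (1 - h ^ 2) < Real.sqrt ((1 - h ^ 2 / 2) ^ 2) := by
      apply Real.sqrt_lt_sqrt (by linarith) h1
    rwa [Real.sqrt_sq (by nlinarith)] at h2
  have hαgt : h ^ 2 / 2 < α := by linarith
  have hlamge : α ≤ lam := by
    rw [hW2eq] at step1
    exact le_of_mul_le_mul_right (by linarith) hD2pos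
  linarith

private lemma spectral {n : ℕ} (L : Matrix (Fin n) (Fin n) ℝ) (v : Fin n → ℝ)
    (hLsym : ∀ i j, L i j = L j i)
    (hLv : ∀ i, ∑ j, L i j * v j = 0)
    (w : Fin n → ℝ) (hw : ∃ i, w i ≠ 0) (hwv : ∑ i, w i * v i = 0)
    (lam : ℝ)
    (hlam : lam = sInf {r | ∃ x : Fin n → ℝ, x ≠ 0 ∧ (∑ i, x i * v i) = 0 ∧
      r = (∑ i, x i * (L.mulVec x) i) / ∑ i, x i ^ 2}) :
    ∃ x : Fin n → ℝ, x ≠ 0 ∧ (∑ i, x i * v i) = 0 ∧ ∀ i, L.mulVec x i = lam * x i := by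
  classical
  let ve : EuclideanSpace ℝ (Fin n) := (WithLp.equiv 2 (Fin n → ℝ)).symm v
  set T := Matrix.toEuclideanLin L with hT
  have happ : ∀ (x : EuclideanSpace ℝ (Fin n)) (i : Fin n), T x i = ∑ j, L i j * x j :=
    fun _ _ => rfl
  have hinner : ∀ x y : EuclideanSpace ℝ (Fin n), (inner ℝ x y : ℝ) = ∑ i, x i * y i := by
    intro x y; simp [PiLp.inner_apply, RCLike.inner_apply, mul_comm]
  have hnormsq : ∀ x : EuclideanSpace ℝ (Fin n), ‖x‖ ^ 2 = ∑ i, x i ^ 2 := by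
    intro x
    rw [← real_inner_self_eq_norm_sq, hinner]
    exact Finset.sum_congr rfl fun i _ => (sq (x i)).symm
  have hTsym : T.IsSymmetric := by
    intro x y
    rw [hinner, hinner]
    calc ∑ i, T x i * y i = ∑ i, ∑ j, L i j * x j * y i := by
          refine Finset.sum_congr rfl fun i _ => ?_
          rw [happ, Finset.sum_mul]
      _ = ∑ j, ∑ i, L i j * x j * y i := Finset.sum_comm
      _ = ∑ i, x i * T y i := by
          refine Finset.sum_congr rfl fun i _ => ?_
          rw [happ, Finset.mul_sum]
          exact Finset.sum_congr rfl fun j _ => by rw [hLsym j i]; ring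
  have hTv : T ve = 0 := by
    ext i
    have h1 : T ve i = ∑ j, L i j * v j := happ ve i
    rw [h1, hLv i]; rfl
  have hWmem : ∀ x : EuclideanSpace ℝ (Fin n),
      x ∈ (Submodule.span ℝ {ve})ᗮ ↔ ∑ i, x i * v i = 0 := by
    intro x
    have h1 : x ∈ (Submodule.span ℝ {ve})ᗮ ↔ (inner ℝ ve x : ℝ) = 0 :=
      Submodule.mem_orthogonal_singleton_iff_inner_right
    rw [h1, hinner]
    have h2 : ∑ i, (ve : EuclideanSpace ℝ (Fin n)) i * x i = ∑ i, x i * v i :=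
      Finset.sum_congr rfl fun i _ => mul_comm _ _
    rw [h2]
  have hinv : ∀ x ∈ (Submodule.span ℝ {ve})ᗮ, T x ∈ (Submodule.span ℝ {ve})ᗮ := by
    intro x hx
    rw [hWmem]
    have h1 : (inner ℝ ve (T x) : ℝ) = 0 := by
      rw [← hTsym ve x, hTv, inner_zero_left]
    rw [hinner] at h1
    rw [← h1]
    exact Finset.sum_congr rfl fun i _ => mul_comm _ _
  have hWnontriv : Nontrivial ((Submodule.span ℝ {ve})ᗮ : Submodule ℝ (EuclideanSpace ℝ (Fin n))) := by
    obtain ⟨i, hi⟩ := hw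
    have hmemw : ((WithLp.equiv 2 (Fin n → ℝ)).symm w : EuclideanSpace ℝ (Fin n))
        ∈ (Submodule.span ℝ {ve})ᗮ := (hWmem _).mpr hwv
    refine ⟨⟨(⟨(WithLp.equiv 2 (Fin n → ℝ)).symm w, hmemw⟩ :
      (Submodule.span ℝ {ve})ᗮ), 0, ?_⟩⟩
    intro hc
    have h0 : ((WithLp.equiv 2 (Fin n → ℝ)).symm w : EuclideanSpace ℝ (Fin n)) = 0 :=
      congrArg Subtype.val hc
    exact hi (congrFun (congrArg (WithLp.equiv 2 (Fin n → ℝ)) h0) i)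
  set T' := T.restrict hinv with hT'
  have hT'sym : T'.IsSymmetric := hTsym.restrict_invariant hinv
  have heig := hT'sym.hasEigenvalue_iInf_of_finiteDimensional
  set μ : ℝ := (⨅ x : { x : (Submodule.span ℝ {ve})ᗮ // x ≠ 0 },
      RCLike.re (inner ℝ (T' ↑x) ((x : (Submodule.span ℝ {ve})ᗮ) : (Submodule.span ℝ {ve})ᗮ) : ℝ)
        / ‖((x : (Submodule.span ℝ {ve})ᗮ) : (Submodule.span ℝ {ve})ᗮ)‖ ^ 2) with hμ
  have hvalue : ∀ p : { x : (Submodule.span ℝ {ve})ᗮ // x ≠ 0 },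
      RCLike.re (inner ℝ (T' ↑p) ((p : (Submodule.span ℝ {ve})ᗮ)) : ℝ)
          / ‖((p : (Submodule.span ℝ {ve})ᗮ))‖ ^ 2
        = (∑ i, (((p : (Submodule.span ℝ {ve})ᗮ)) : EuclideanSpace ℝ (Fin n)) i
            * L.mulVec (fun i => (((p : (Submodule.span ℝ {ve})ᗮ)) : EuclideanSpace ℝ (Fin n)) i) i)
          / ∑ i, (((p : (Submodule.span ℝ {ve})ᗮ)) : EuclideanSpace ℝ (Fin n)) i ^ 2 := by
    intro p
    set x := (p : (Submodule.span ℝ {ve})ᗮ) with hx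
    have h1 : (inner ℝ (T' x) x : ℝ)
        = ∑ i, (x : EuclideanSpace ℝ (Fin n)) i
            * L.mulVec (fun i => (x : EuclideanSpace ℝ (Fin n)) i) i := by
      rw [Submodule.coe_inner, hinner]
      refine Finset.sum_congr rfl fun i _ => ?_
      have h2 : ((T' x : (Submodule.span ℝ {ve})ᗮ) : EuclideanSpace ℝ (Fin n)) i
          = L.mulVec (fun i => (x : EuclideanSpace ℝ (Fin n)) i) i := rfl
      rw [h2, mul_comm]
    have h3 : ‖x‖ ^ 2 = ∑ i, (x : EuclideanSpace ℝ (Fin n)) i ^ 2 := by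
      rw [show ‖x‖ = ‖(x : EuclideanSpace ℝ (Fin n))‖ from rfl, hnormsq]
    simp only [RCLike.re_to_real]
    rw [h1, h3]
  have hseteq : {r | ∃ x : Fin n → ℝ, x ≠ 0 ∧ (∑ i, x i * v i) = 0 ∧
      r = (∑ i, x i * (L.mulVec x) i) / ∑ i, x i ^ 2}
      = Set.range (fun x : { x : (Submodule.span ℝ {ve})ᗮ // x ≠ 0 } =>
          RCLike.re (inner ℝ (T' ↑x) ((x : (Submodule.span ℝ {ve})ᗮ)) : ℝ)
            / ‖((x : (Submodule.span ℝ {ve})ᗮ))‖ ^ 2) := by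
    ext r
    constructor
    · rintro ⟨xf, hxne, horth, rfl⟩
      have hmem : ((WithLp.equiv 2 (Fin n → ℝ)).symm xf : EuclideanSpace ℝ (Fin n))
          ∈ (Submodule.span ℝ {ve})ᗮ := (hWmem _).mpr horth
      have hxe0 : (⟨(WithLp.equiv 2 (Fin n → ℝ)).symm xf, hmem⟩ :
          (Submodule.span ℝ {ve})ᗮ) ≠ 0 := by
        intro hc
        apply hxne
        have h0 : ((WithLp.equiv 2 (Fin n → ℝ)).symm xf : EuclideanSpace ℝ (Fin n)) = 0 :=
          congrArg Subtype.val hc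
        funext i
        exact congrFun (congrArg (WithLp.equiv 2 (Fin n → ℝ)) h0) i
      refine ⟨⟨⟨(WithLp.equiv 2 (Fin n → ℝ)).symm xf, hmem⟩, hxe0⟩, ?_⟩
      simpa using hvalue ⟨⟨(WithLp.equiv 2 (Fin n → ℝ)).symm xf, hmem⟩, hxe0⟩
    · rintro ⟨p, rfl⟩
      refine ⟨fun i => (((p : (Submodule.span ℝ {ve})ᗮ)) : EuclideanSpace ℝ (Fin n)) i, ?_,
        (hWmem _).mp (p : (Submodule.span ℝ {ve})ᗮ).2, ?_⟩
      · intro hc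
        apply p.2
        apply Subtype.ext
        ext i
        exact congrFun hc i
      · simpa using hvalue p
  have hlamμ : lam = μ := by
    rw [hlam, hμ, hseteq, sInf_range]
  obtain ⟨u, humem, hune⟩ := heig.exists_hasEigenvector
  have hueq : T' u = μ • u := by
    have h1 := Module.End.mem_eigenspace_iff.mp humem
    simpa using h1
  refine ⟨fun i => ((u : EuclideanSpace ℝ (Fin n))) i, ?_, (hWmem _).mp u.2, ?_⟩
  · intro hc
    apply hune
    apply Subtype.ext
    ext i
    exact congrFun hc i
  · intro i
    have h1 : L.mulVec (fun i => (u : EuclideanSpace ℝ (Fin n)) i) i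
        = ((T' u : (Submodule.span ℝ {ve})ᗮ) : EuclideanSpace ℝ (Fin n)) i := rfl
    rw [h1, hueq]
    have h2 : (((μ • u : (Submodule.span ℝ {ve})ᗮ)) : EuclideanSpace ℝ (Fin n)) i
        = μ * (u : EuclideanSpace ℝ (Fin n)) i := rfl
    rw [h2, hlamμ]
set_option maxHeartbeats 1600000 in
/-- Cheeger's inequality for the normalized Laplacian of a
connected graph: `2 h_G ≥ λ_{n−1}(L) > h_G² / 2`, where `h_G` is the Cheeger
constant and `λ_{n−1}(L)` the second smallest eigenvalue of `L`, characterized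
variationally as the infimum of the Rayleigh quotient over the orthogonal
complement of `D^{1/2}𝟙`. -/
theorem cheeger_inequality {n : ℕ} (hn : 2 ≤ n)
    (G : SimpleGraph (Fin n)) [DecidableRel G.Adj] (hconn : G.Connected)
    (A : Matrix (Fin n) (Fin n) ℝ) (hA : A = G.adjMatrix ℝ)
    (δ : Fin n → ℝ) (hδ : ∀ i, δ i = (G.degree i : ℝ))
    (L : Matrix (Fin n) (Fin n) ℝ)
    (hL : ∀ i j, L i j =
      (if i = j then (1 : ℝ) else 0) - A i j / (Real.sqrt (δ i) * Real.sqrt (δ j)))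
    (hG : ℝ)
    (hhG : hG = sInf {r | ∃ S : Finset (Fin n), S.Nonempty ∧ Sᶜ.Nonempty ∧
      r = (∑ i ∈ S, ∑ j ∈ Sᶜ, A i j) / min (∑ i ∈ S, δ i) (∑ i ∈ Sᶜ, δ i)})
    (lam : ℝ)
    (hlam : lam = sInf {r | ∃ x : Fin n → ℝ, x ≠ 0 ∧
      (∑ i, x i * Real.sqrt (δ i)) = 0 ∧
      r = (∑ i, x i * (L.mulVec x) i) / ∑ i, x i ^ 2}) :
    2 * hG ≥ lam ∧ lam > hG ^ 2 / 2 := by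
  classical
  -- ===== basic facts =====
  have hAsymm : ∀ i j, A i j = A j i := by
    intro i j; rw [hA]; simp [SimpleGraph.adjMatrix_apply, SimpleGraph.adj_comm]
  have hAnn : ∀ i j, 0 ≤ A i j := by
    intro i j; rw [hA, SimpleGraph.adjMatrix_apply]; split <;> norm_num
  haveI : Nontrivial (Fin n) := ⟨⟨⟨0, by omega⟩, ⟨1, by omega⟩, by simp⟩⟩
  have hdegpos : ∀ i : Fin n, 0 < G.degree i := by
    intro i
    obtain ⟨w, hw⟩ := exists_ne i
    obtain ⟨p⟩ := hconn.preconnected w i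
    obtain ⟨d, _, hd1, hd2⟩ := p.exists_boundary_dart {i}ᶜ (by simpa using hw) (by simp)
    rw [SimpleGraph.degree_pos_iff_exists_adj]
    have hsnd : d.snd = i := by simpa using hd2
    exact ⟨d.fst, hsnd ▸ d.adj.symm⟩
  have hδpos : ∀ i, 0 < δ i := fun i => by rw [hδ]; exact_mod_cast hdegpos i
  have hsqpos : ∀ i, 0 < Real.sqrt (δ i) := fun i => Real.sqrt_pos.mpr (hδpos i)
  have hsqmul : ∀ i, Real.sqrt (δ i) * Real.sqrt (δ i) = δ i :=
    fun i => Real.mul_self_sqrt (hδpos i).le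
  have hrow : ∀ i, ∑ j, A i j = δ i := by
    intro i
    rw [hδ, hA]
    simp only [SimpleGraph.adjMatrix_apply]
    rw [Finset.sum_boole]
    congr 1
    rw [SimpleGraph.degree, SimpleGraph.neighborFinset_eq_filter]
  -- ===== cut and volume facts =====
  have hvolpos : ∀ S : Finset (Fin n), S.Nonempty → 0 < ∑ i ∈ S, δ i :=
    fun S hS => Finset.sum_pos (fun i _ => hδpos i) hS
  have hcutnn : ∀ S : Finset (Fin n), 0 ≤ ∑ i ∈ S, ∑ j ∈ Sᶜ, A i j :=
    fun S => Finset.sum_nonneg fun i _ => Finset.sum_nonneg fun j _ => hAnn i j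
  have hcutpos : ∀ S : Finset (Fin n), S.Nonempty → Sᶜ.Nonempty →
      0 < ∑ i ∈ S, ∑ j ∈ Sᶜ, A i j := by
    intro S hS hSc
    obtain ⟨a, ha⟩ := hS
    obtain ⟨b, hb⟩ := hSc
    have hbS : b ∉ S := Finset.mem_compl.mp hb
    obtain ⟨p⟩ := hconn.preconnected a b
    obtain ⟨d, _, hd1, hd2⟩ := p.exists_boundary_dart (↑S) ha hbS
    have hd1' : d.fst ∈ S := hd1
    have hd2' : d.snd ∈ Sᶜ := Finset.mem_compl.mpr hd2
    have hAd : A d.fst d.snd = 1 := by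
      rw [hA, SimpleGraph.adjMatrix_apply, if_pos d.adj]
    have hinner : 0 < ∑ j ∈ Sᶜ, A d.fst j := by
      have h1 : A d.fst d.snd ≤ ∑ j ∈ Sᶜ, A d.fst j := Finset.single_le_sum (f := fun j => A d.fst j)
        (fun j _ => hAnn d.fst j) hd2'
      rw [hAd] at h1
      linarith
    exact Finset.sum_pos' (fun i _ => Finset.sum_nonneg fun j _ => hAnn i j) ⟨d.fst, hd1', hinner⟩
  -- ===== Cheeger constant facts =====
  have hSfin : ({r | ∃ S : Finset (Fin n), S.Nonempty ∧ Sᶜ.Nonempty ∧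
      r = (∑ i ∈ S, ∑ j ∈ Sᶜ, A i j) / min (∑ i ∈ S, δ i) (∑ i ∈ Sᶜ, δ i)} : Set ℝ).Finite := by
    apply Set.Finite.subset (Set.finite_range (fun S : Finset (Fin n) =>
      (∑ i ∈ S, ∑ j ∈ Sᶜ, A i j) / min (∑ i ∈ S, δ i) (∑ i ∈ Sᶜ, δ i)))
    rintro r ⟨S, _, _, rfl⟩
    exact ⟨S, rfl⟩
  have hSne : ({r | ∃ S : Finset (Fin n), S.Nonempty ∧ Sᶜ.Nonempty ∧
      r = (∑ i ∈ S, ∑ j ∈ Sᶜ, A i j) / min (∑ i ∈ S, δ i) (∑ i ∈ Sᶜ, δ i)} : Set ℝ).Nonempty := by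
    refine ⟨_, ⟨{(⟨0, by omega⟩ : Fin n)}, ⟨_, Finset.mem_singleton_self _⟩, ?_, rfl⟩⟩
    refine ⟨⟨1, by omega⟩, Finset.mem_compl.mpr ?_⟩
    simp [Finset.mem_singleton, Fin.ext_iff]
  have hbddH : BddBelow ({r | ∃ S : Finset (Fin n), S.Nonempty ∧ Sᶜ.Nonempty ∧
      r = (∑ i ∈ S, ∑ j ∈ Sᶜ, A i j) / min (∑ i ∈ S, δ i) (∑ i ∈ Sᶜ, δ i)} : Set ℝ) := by
    refine ⟨0, ?_⟩
    rintro r ⟨S, hS, hSc, rfl⟩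
    exact div_nonneg (hcutnn S) (le_min (hvolpos S hS).le (hvolpos Sᶜ hSc).le)
  have hGmem := Set.Nonempty.csInf_mem hSne hSfin
  rw [← hhG] at hGmem
  obtain ⟨S₀, hS₀ne, hS₀c, hGeq⟩ := hGmem
  have hGpos : 0 < hG := by
    rw [hGeq]
    exact div_pos (hcutpos S₀ hS₀ne hS₀c) (lt_min (hvolpos S₀ hS₀ne) (hvolpos S₀ᶜ hS₀c))
  have hGle : ∀ S : Finset (Fin n), S.Nonempty → Sᶜ.Nonempty →
      hG * min (∑ i ∈ S, δ i) (∑ i ∈ Sᶜ, δ i) ≤ ∑ i ∈ S, ∑ j ∈ Sᶜ, A i j := by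
    intro S h1 h2
    have hmem : (∑ i ∈ S, ∑ j ∈ Sᶜ, A i j) / min (∑ i ∈ S, δ i) (∑ i ∈ Sᶜ, δ i) ∈
        ({r | ∃ S : Finset (Fin n), S.Nonempty ∧ Sᶜ.Nonempty ∧
          r = (∑ i ∈ S, ∑ j ∈ Sᶜ, A i j) / min (∑ i ∈ S, δ i) (∑ i ∈ Sᶜ, δ i)} : Set ℝ) :=
      ⟨S, h1, h2, rfl⟩
    have hle := csInf_le hbddH hmem
    rw [← hhG] at hle
    have hminpos := lt_min (hvolpos S h1) (hvolpos Sᶜ h2)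
    calc hG * min (∑ i ∈ S, δ i) (∑ i ∈ Sᶜ, δ i)
        ≤ ((∑ i ∈ S, ∑ j ∈ Sᶜ, A i j) / min (∑ i ∈ S, δ i) (∑ i ∈ Sᶜ, δ i))
          * min (∑ i ∈ S, δ i) (∑ i ∈ Sᶜ, δ i) :=
          mul_le_mul_of_nonneg_right hle hminpos.le
      _ = ∑ i ∈ S, ∑ j ∈ Sᶜ, A i j := by field_simp
  -- ===== quadratic form =====
  have hmulVec : ∀ (x : Fin n → ℝ) (i : Fin n),
      L.mulVec x i = x i - ∑ j, A i j * x j / (Real.sqrt (δ i) * Real.sqrt (δ j)) := by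
    intro x i
    have h1 : L.mulVec x i = ∑ j, L i j * x j := rfl
    rw [h1]
    have h2 : ∀ j, L i j * x j = (if i = j then x j else 0)
        - A i j * x j / (Real.sqrt (δ i) * Real.sqrt (δ j)) := by
      intro j
      rw [hL i j]
      by_cases hij : i = j <;> simp [hij] <;> ring
    rw [Finset.sum_congr rfl fun j _ => h2 j, Finset.sum_sub_distrib, Finset.sum_ite_eq]
    simp
  have hnum : ∀ x : Fin n → ℝ, ∑ i, x i * L.mulVec x i
      = (∑ i, δ i * (x i / Real.sqrt (δ i)) ^ 2)
        - ∑ i, ∑ j, A i j * ((x i / Real.sqrt (δ i)) * (x j / Real.sqrt (δ j))) := by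
    intro x
    have h1 : ∀ i, x i * L.mulVec x i = δ i * (x i / Real.sqrt (δ i)) ^ 2
        - ∑ j, A i j * ((x i / Real.sqrt (δ i)) * (x j / Real.sqrt (δ j))) := by
      intro i
      rw [hmulVec x i, mul_sub, Finset.mul_sum]
      congr 1
      · rw [div_pow, Real.sq_sqrt (hδpos i).le]
        field_simp [(hδpos i).ne']
      · refine Finset.sum_congr rfl fun j _ => ?_
        field_simp
    rw [Finset.sum_congr rfl fun i _ => h1 i, Finset.sum_sub_distrib]
  have hQnn : ∀ x : Fin n → ℝ, 0 ≤ ∑ i, x i * L.mulVec x i := by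
    intro x
    rw [hnum x]
    set y := fun i => x i / Real.sqrt (δ i) with hy
    have h2 := sum_expand_sq hAsymm hrow y (-1)
    have h3 : 0 ≤ ∑ i, ∑ j, A i j * (y i + (-1) * y j) ^ 2 :=
      Finset.sum_nonneg fun i _ => Finset.sum_nonneg fun j _ =>
        mul_nonneg (hAnn i j) (sq_nonneg _)
    rw [h2] at h3
    have h4 : ∑ i, ∑ j, A i j * (y i * y j)
        = ∑ i, ∑ j, A i j * (x i / Real.sqrt (δ i) * (x j / Real.sqrt (δ j))) := rfl
    rw [← h4]
    nlinarith [h3]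
  have hbddL : BddBelow ({r | ∃ x : Fin n → ℝ, x ≠ 0 ∧
      (∑ i, x i * Real.sqrt (δ i)) = 0 ∧
      r = (∑ i, x i * (L.mulVec x) i) / ∑ i, x i ^ 2} : Set ℝ) := by
    refine ⟨0, ?_⟩
    rintro r ⟨x, hx, _, rfl⟩
    exact div_nonneg (hQnn x) (Finset.sum_nonneg fun i _ => sq_nonneg _)
  -- ===== EASY DIRECTION =====
  have heasy : lam ≤ 2 * hG := by
    set p := ∑ i ∈ S₀, δ i with hp
    set q := ∑ i ∈ S₀ᶜ, δ i with hq
    set c := ∑ i ∈ S₀, ∑ j ∈ S₀ᶜ, A i j with hc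
    have hppos : 0 < p := hvolpos S₀ hS₀ne
    have hqpos : 0 < q := hvolpos S₀ᶜ hS₀c
    have hcnn : 0 ≤ c := hcutnn S₀
    set x := fun i => Real.sqrt (δ i) * (if i ∈ S₀ then q else -p) with hxdef
    have hyval : ∀ i, x i / Real.sqrt (δ i) = (if i ∈ S₀ then q else -p) := by
      intro i
      rw [hxdef]
      by_cases hi : i ∈ S₀ <;> simp only [hi, if_true, if_false] <;>
        rw [mul_comm, mul_div_assoc, div_self (hsqpos i).ne', mul_one]
    have hxsq : ∀ i, x i ^ 2 = δ i * (if i ∈ S₀ then q ^ 2 else p ^ 2) := by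
      intro i
      rw [hxdef, mul_pow]
      rw [Real.sq_sqrt (hδpos i).le]
      by_cases hi : i ∈ S₀ <;> simp [hi] <;> try ring
    have hden : ∑ i, x i ^ 2 = q ^ 2 * p + p ^ 2 * q := by
      rw [Finset.sum_congr rfl fun i _ => hxsq i]
      rw [← Finset.sum_add_sum_compl S₀]
      have e1 : ∑ i ∈ S₀, δ i * (if i ∈ S₀ then q ^ 2 else p ^ 2) = q ^ 2 * p := by
        rw [show q ^ 2 * p = ∑ i ∈ S₀, δ i * q ^ 2 by rw [← Finset.sum_mul]; ring]
        exact Finset.sum_congr rfl fun i hi => by rw [if_pos hi]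
      have e2 : ∑ i ∈ S₀ᶜ, δ i * (if i ∈ S₀ then q ^ 2 else p ^ 2) = p ^ 2 * q := by
        rw [show p ^ 2 * q = ∑ i ∈ S₀ᶜ, δ i * p ^ 2 by rw [← Finset.sum_mul]; ring]
        exact Finset.sum_congr rfl fun i hi => by
          rw [if_neg (Finset.mem_compl.mp hi)]
      rw [e1, e2]
    have hAS : ∑ i ∈ S₀, ∑ j ∈ S₀, A i j = p - c := by
      have h1 : ∀ i, ∑ j, A i j = ∑ j ∈ S₀, A i j + ∑ j ∈ S₀ᶜ, A i j :=
        fun i => (Finset.sum_add_sum_compl S₀ _).symm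
      have h2 : ∑ i ∈ S₀, ∑ j, A i j = p := by
        rw [hp]; exact Finset.sum_congr rfl fun i _ => hrow i
      rw [Finset.sum_congr rfl fun i _ => h1 i, Finset.sum_add_distrib] at h2
      rw [← hc] at h2
      linarith
    have hASc : ∑ i ∈ S₀ᶜ, ∑ j ∈ S₀ᶜ, A i j = q - c := by
      have h1 : ∀ i, ∑ j, A i j = ∑ j ∈ S₀, A i j + ∑ j ∈ S₀ᶜ, A i j :=
        fun i => (Finset.sum_add_sum_compl S₀ _).symm
      have h2 : ∑ i ∈ S₀ᶜ, ∑ j, A i j = q := by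
        rw [hq]; exact Finset.sum_congr rfl fun i _ => hrow i
      rw [Finset.sum_congr rfl fun i _ => h1 i, Finset.sum_add_distrib] at h2
      have h3 : ∑ i ∈ S₀ᶜ, ∑ j ∈ S₀, A i j = c := by rw [hc]; exact cut_swap hAsymm S₀
      rw [h3] at h2
      linarith
    have hnumval : ∑ i, x i * L.mulVec x i = c * (p + q) ^ 2 := by
      rw [hnum x]
      have hsum1 : ∑ i, δ i * (x i / Real.sqrt (δ i)) ^ 2 = q ^ 2 * p + p ^ 2 * q := by
        rw [← hden]
        refine Finset.sum_congr rfl fun i _ => ?_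
        rw [hxsq i, hyval i]
        by_cases hi : i ∈ S₀ <;> simp [hi] <;> try ring
      have hsum2 : ∑ i, ∑ j, A i j * (x i / Real.sqrt (δ i) * (x j / Real.sqrt (δ j)))
          = q ^ 2 * (p - c) - q * p * c - p * q * c + p ^ 2 * (q - c) := by
        have hterm : ∀ i j, A i j * (x i / Real.sqrt (δ i) * (x j / Real.sqrt (δ j)))
            = A i j * ((if i ∈ S₀ then q else -p) * (if j ∈ S₀ then q else -p)) := by
          intro i j; rw [hyval i, hyval j]
        rw [Finset.sum_congr rfl fun i _ => Finset.sum_congr rfl fun j _ => hterm i j]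
        rw [← Finset.sum_add_sum_compl S₀]
        have hin : ∀ i, ∑ j, A i j * ((if i ∈ S₀ then q else -p) * (if j ∈ S₀ then q else -p))
            = (∑ j ∈ S₀, A i j * ((if i ∈ S₀ then q else -p) * q))
              + ∑ j ∈ S₀ᶜ, A i j * ((if i ∈ S₀ then q else -p) * (-p)) := by
          intro i
          rw [← Finset.sum_add_sum_compl S₀]
          congr 1
          · exact Finset.sum_congr rfl fun j hj => by rw [if_pos hj]
          · exact Finset.sum_congr rfl fun j hj => by rw [if_neg (Finset.mem_compl.mp hj)]
        rw [Finset.sum_congr rfl fun i (_ : i ∈ S₀) => hin i,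
          Finset.sum_congr rfl fun i (_ : i ∈ S₀ᶜ) => hin i]
        rw [Finset.sum_add_distrib, Finset.sum_add_distrib]
        have e11 : ∑ i ∈ S₀, ∑ j ∈ S₀, A i j * ((if i ∈ S₀ then q else -p) * q)
            = q ^ 2 * (p - c) := by
          rw [show q ^ 2 * (p - c) = (∑ i ∈ S₀, ∑ j ∈ S₀, A i j) * q ^ 2 by rw [hAS]; ring,
            Finset.sum_mul]
          refine Finset.sum_congr rfl fun i hi => ?_
          rw [Finset.sum_mul]
          refine Finset.sum_congr rfl fun j _ => by rw [if_pos hi]; try ring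
        have e12 : ∑ i ∈ S₀, ∑ j ∈ S₀ᶜ, A i j * ((if i ∈ S₀ then q else -p) * (-p))
            = -(q * p * c) := by
          rw [show -(q * p * c) = (∑ i ∈ S₀, ∑ j ∈ S₀ᶜ, A i j) * (q * (-p)) by rw [← hc]; ring,
            Finset.sum_mul]
          refine Finset.sum_congr rfl fun i hi => ?_
          rw [Finset.sum_mul]
          refine Finset.sum_congr rfl fun j _ => by rw [if_pos hi]; try ring
        have e21 : ∑ i ∈ S₀ᶜ, ∑ j ∈ S₀, A i j * ((if i ∈ S₀ then q else -p) * q)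
            = -(p * q * c) := by
          rw [show -(p * q * c) = (∑ i ∈ S₀ᶜ, ∑ j ∈ S₀, A i j) * (-p * q) by
            rw [cut_swap hAsymm S₀, ← hc]; ring, Finset.sum_mul]
          refine Finset.sum_congr rfl fun i hi => ?_
          rw [Finset.sum_mul]
          refine Finset.sum_congr rfl fun j _ => by
            rw [if_neg (Finset.mem_compl.mp hi)]; try ring
        have e22 : ∑ i ∈ S₀ᶜ, ∑ j ∈ S₀ᶜ, A i j * ((if i ∈ S₀ then q else -p) * (-p))
            = p ^ 2 * (q - c) := by
          rw [show p ^ 2 * (q - c) = (∑ i ∈ S₀ᶜ, ∑ j ∈ S₀ᶜ, A i j) * (-p * -p) by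
            rw [hASc]; ring, Finset.sum_mul]
          refine Finset.sum_congr rfl fun i hi => ?_
          rw [Finset.sum_mul]
          refine Finset.sum_congr rfl fun j _ => by
            rw [if_neg (Finset.mem_compl.mp hi)]; try ring
        rw [e11, e12, e21, e22]
        ring
      rw [hsum1, hsum2]
      ring
    have hxne : x ≠ 0 := by
      obtain ⟨i₀, hi₀⟩ := hS₀ne
      intro hcon
      have h0 : x i₀ = 0 := congrFun hcon i₀
      rw [hxdef] at h0
      simp only [if_pos hi₀] at h0
      rcases mul_eq_zero.mp h0 with h | h
      · exact absurd h (hsqpos i₀).ne'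
      · exact absurd h hqpos.ne'
    have horth : ∑ i, x i * Real.sqrt (δ i) = 0 := by
      have hterm : ∀ i, x i * Real.sqrt (δ i) = δ i * (if i ∈ S₀ then q else -p) := by
        intro i
        rw [hxdef]
        rw [show Real.sqrt (δ i) * (if i ∈ S₀ then q else -p) * Real.sqrt (δ i)
          = (Real.sqrt (δ i) * Real.sqrt (δ i)) * (if i ∈ S₀ then q else -p) by ring, hsqmul i]
      rw [Finset.sum_congr rfl fun i _ => hterm i, ← Finset.sum_add_sum_compl S₀]
      have e1 : ∑ i ∈ S₀, δ i * (if i ∈ S₀ then q else -p) = p * q := by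
        rw [show p * q = ∑ i ∈ S₀, δ i * q by rw [← Finset.sum_mul]]
        exact Finset.sum_congr rfl fun i hi => by rw [if_pos hi]
      have e2 : ∑ i ∈ S₀ᶜ, δ i * (if i ∈ S₀ then q else -p) = -(p * q) := by
        rw [show -(p * q) = ∑ i ∈ S₀ᶜ, δ i * (-p) by rw [← Finset.sum_mul]; ring]
        exact Finset.sum_congr rfl fun i hi => by rw [if_neg (Finset.mem_compl.mp hi)]
      rw [e1, e2]
      ring
    have hmemL : c * (p + q) ^ 2 / (q ^ 2 * p + p ^ 2 * q) ∈
        ({r | ∃ x : Fin n → ℝ, x ≠ 0 ∧ (∑ i, x i * Real.sqrt (δ i)) = 0 ∧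
          r = (∑ i, x i * (L.mulVec x) i) / ∑ i, x i ^ 2} : Set ℝ) :=
      ⟨x, hxne, horth, by rw [hnumval, hden]⟩
    have hlamle : lam ≤ c * (p + q) ^ 2 / (q ^ 2 * p + p ^ 2 * q) := by
      rw [hlam]; exact csInf_le hbddL hmemL
    have hfinal : c * (p + q) ^ 2 / (q ^ 2 * p + p ^ 2 * q) ≤ 2 * hG := by
      rw [hGeq]
      set m := min p q with hm
      have hmp : m ≤ p := min_le_left p q
      have hmq : m ≤ q := min_le_right p q
      have hmpos : 0 < m := lt_min hppos hqpos
      have hdenpos : 0 < q ^ 2 * p + p ^ 2 * q := by positivity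
      rw [show 2 * (c / m) = 2 * c / m by ring, div_le_div_iff₀ hdenpos hmpos]
      have hkey : m * (p + q) ≤ 2 * (p * q) := by
        nlinarith [mul_le_mul_of_nonneg_right hmp hqpos.le,
          mul_le_mul_of_nonneg_right hmq hppos.le]
      nlinarith [mul_le_mul_of_nonneg_left hkey (mul_nonneg hcnn (add_pos hppos hqpos).le),
        mul_pos hppos hqpos]
    linarith
  -- ===== HARD DIRECTION =====
  have hLsym : ∀ i j, L i j = L j i := by
    intro i j
    rw [hL i j, hL j i, hAsymm i j]
    rw [show ((if i = j then (1:ℝ) else 0)) = (if j = i then (1:ℝ) else 0) by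
      by_cases hij : i = j <;> simp [hij, eq_comm]]
    rw [show Real.sqrt (δ i) * Real.sqrt (δ j) = Real.sqrt (δ j) * Real.sqrt (δ i) by ring]
  have hLv : ∀ i, ∑ j, L i j * Real.sqrt (δ j) = 0 := by
    intro i
    have h1 : ∀ j, L i j * Real.sqrt (δ j)
        = (if i = j then Real.sqrt (δ j) else 0) - A i j / Real.sqrt (δ i) := by
      intro j
      rw [hL i j]
      have hcancel : A i j / (Real.sqrt (δ i) * Real.sqrt (δ j)) * Real.sqrt (δ j)
          = A i j / Real.sqrt (δ i) := by
        rw [div_mul_eq_mul_div, mul_div_mul_right _ _ (hsqpos j).ne']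
      by_cases hij : i = j
      · rw [if_pos hij, if_pos hij, sub_mul, one_mul, hcancel]
      · rw [if_neg hij, if_neg hij, sub_mul, zero_mul, hcancel]
    rw [Finset.sum_congr rfl fun j _ => h1 j, Finset.sum_sub_distrib, Finset.sum_ite_eq]
    simp only [Finset.mem_univ, if_true]
    rw [← Finset.sum_div, hrow i]
    rw [show δ i / Real.sqrt (δ i) = Real.sqrt (δ i) by
      rw [eq_comm, eq_div_iff (hsqpos i).ne', hsqmul i]]
    ring
  have hw2 : ∃ w : Fin n → ℝ, (∃ i, w i ≠ 0) ∧ ∑ i, w i * Real.sqrt (δ i) = 0 := by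
    set i1 : Fin n := ⟨0, by omega⟩ with hi1
    set i2 : Fin n := ⟨1, by omega⟩ with hi2
    have h12 : i1 ≠ i2 := by simp [hi1, hi2, Fin.ext_iff]
    set w := fun k => if k = i1 then Real.sqrt (δ i2) else
      if k = i2 then -Real.sqrt (δ i1) else 0 with hwdef
    refine ⟨w, ⟨i1, by simp only [hwdef]; simp [(hsqpos i2).ne']⟩, ?_⟩
    have hterm : ∀ k, w k * Real.sqrt (δ k)
        = (if k = i1 then Real.sqrt (δ i2) * Real.sqrt (δ i1) else 0)
          + (if k = i2 then -(Real.sqrt (δ i1) * Real.sqrt (δ i2)) else 0) := by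
      intro k
      simp only [hwdef]
      by_cases h1 : k = i1
      · subst h1
        rw [if_pos rfl, if_pos rfl, if_neg h12]
        ring
      · rw [if_neg h1, if_neg h1]
        by_cases h2 : k = i2
        · subst h2
          rw [if_pos rfl, if_pos rfl]
          ring
        · rw [if_neg h2, if_neg h2]
          ring
    rw [Finset.sum_congr rfl fun k _ => hterm k, Finset.sum_add_distrib,
      Finset.sum_ite_eq', Finset.sum_ite_eq']
    simp only [Finset.mem_univ, if_true]
    ring
  obtain ⟨w, hwne, hworth⟩ := hw2
  obtain ⟨xs, hxsne, hxsorth, hxseig⟩ := spectral L (fun i => Real.sqrt (δ i)) hLsym hLv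
    w hwne hworth lam hlam
  -- convert eigen-equation to f₀
  set f₀ := fun i => xs i / Real.sqrt (δ i) with hf₀
  have hdf : ∀ i, δ i * f₀ i = Real.sqrt (δ i) * xs i := by
    intro i
    rw [hf₀]
    rw [show δ i * (xs i / Real.sqrt (δ i)) = δ i / Real.sqrt (δ i) * xs i by ring]
    rw [show δ i / Real.sqrt (δ i) = Real.sqrt (δ i) by
      rw [eq_comm, eq_div_iff (hsqpos i).ne', hsqmul i]]
  have heigf : ∀ i, ∑ j, A i j * (f₀ i - f₀ j) = lam * (δ i * f₀ i) := by
    intro i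
    have h1 := hxseig i
    rw [hmulVec xs i] at h1
    -- h1 : xs i - ∑ j, A i j * xs j / (√δi * √δj) = lam * xs i
    have h2 : ∑ j, A i j * f₀ j
        = Real.sqrt (δ i) * ∑ j, A i j * xs j / (Real.sqrt (δ i) * Real.sqrt (δ j)) := by
      rw [Finset.mul_sum]
      refine Finset.sum_congr rfl fun j _ => ?_
      simp only [hf₀]
      rw [mul_comm (Real.sqrt (δ i)) (A i j * xs j / (Real.sqrt (δ i) * Real.sqrt (δ j))),
        div_mul_eq_mul_div, mul_comm (Real.sqrt (δ i)) (Real.sqrt (δ j)),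
        mul_div_mul_right _ _ (hsqpos i).ne', mul_div_assoc]
    have h3 : ∑ j, A i j * (f₀ i - f₀ j) = δ i * f₀ i - ∑ j, A i j * f₀ j := by
      have e : ∀ j, A i j * (f₀ i - f₀ j) = A i j * f₀ i - A i j * f₀ j := fun j => by ring
      rw [Finset.sum_congr rfl fun j _ => e j, Finset.sum_sub_distrib, ← Finset.sum_mul, hrow i]
    rw [h3, h2, hdf i]
    have h4 : ∑ j, A i j * xs j / (Real.sqrt (δ i) * Real.sqrt (δ j)) = xs i - lam * xs i := by
      linarith
    rw [h4]
    ring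
  have horthδ : ∑ i, δ i * f₀ i = 0 := by
    rw [Finset.sum_congr rfl fun i _ => hdf i]
    rw [← hxsorth]
    exact Finset.sum_congr rfl fun i _ => mul_comm _ _
  have hf₀ne : ∃ i, f₀ i ≠ 0 := by
    obtain ⟨i, hi⟩ := Function.ne_iff.mp hxsne
    exact ⟨i, div_ne_zero hi (hsqpos i).ne'⟩
  have hpos : ∃ i, 0 < f₀ i := by
    by_contra hno
    push_neg at hno
    have hz := (Finset.sum_eq_zero_iff_of_nonpos
      (fun i _ => mul_nonpos_of_nonneg_of_nonpos (hδpos i).le (hno i))).mp horthδ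
    obtain ⟨i, hi⟩ := hf₀ne
    have := hz i (Finset.mem_univ i)
    rcases mul_eq_zero.mp this with h | h
    · exact absurd h (hδpos i).ne'
    · exact hi h
  have hneg : ∃ i, f₀ i < 0 := by
    by_contra hno
    push_neg at hno
    have hz := (Finset.sum_eq_zero_iff_of_nonneg
      (fun i _ => mul_nonneg (hδpos i).le (hno i))).mp horthδ
    obtain ⟨i, hi⟩ := hf₀ne
    have := hz i (Finset.mem_univ i)
    rcases mul_eq_zero.mp this with h | h
    · exact absurd h (hδpos i).ne'
    · exact hi h
  -- choose sign
  have hdisj : Disjoint (Finset.univ.filter (fun i => 0 < f₀ i))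
      (Finset.univ.filter (fun i => f₀ i < 0)) := by
    rw [Finset.disjoint_left]
    intro i h1 h2
    exact absurd ((Finset.mem_filter.mp h1).2) (asymm ((Finset.mem_filter.mp h2).2))
  have hsum2 : ∑ i ∈ Finset.univ.filter (fun i => 0 < f₀ i), δ i
      + ∑ i ∈ Finset.univ.filter (fun i => f₀ i < 0), δ i ≤ ∑ i, δ i := by
    rw [← Finset.sum_union hdisj]
    exact Finset.sum_le_sum_of_subset_of_nonneg (Finset.subset_univ _)
      (fun i _ _ => (hδpos i).le)
  obtain ⟨f, hfpos, hvolP, heigff⟩ : ∃ f : Fin n → ℝ, (∃ i, 0 < f i)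
      ∧ (∑ i ∈ Finset.univ.filter (fun i => 0 < f i), δ i ≤ (∑ i, δ i) / 2)
      ∧ (∀ i, ∑ j, A i j * (f i - f j) = lam * (δ i * f i)) := by
    by_cases hcase : ∑ i ∈ Finset.univ.filter (fun i => 0 < f₀ i), δ i ≤ (∑ i, δ i) / 2
    · exact ⟨f₀, hpos, hcase, heigf⟩
    · refine ⟨fun i => -f₀ i, ?_, ?_, ?_⟩
      · obtain ⟨i, hi⟩ := hneg
        exact ⟨i, by show (0:ℝ) < -f₀ i; linarith⟩
      · have hfe : Finset.univ.filter (fun i => 0 < -f₀ i)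
            = Finset.univ.filter (fun i => f₀ i < 0) := by
          apply Finset.filter_congr
          intro i _
          simp [neg_pos]
        rw [hfe]
        push_neg at hcase
        linarith
      · intro i
        have h1 := heigf i
        have e : ∀ j, A i j * (-f₀ i - -f₀ j) = -(A i j * (f₀ i - f₀ j)) := fun j => by ring
        rw [Finset.sum_congr rfl fun j _ => e j, Finset.sum_neg_distrib, h1]
        ring
  -- apply the hard core lemma
  have hcutf : ∀ S : Finset (Fin n), S.Nonempty → (∀ i ∈ S, 0 < f i) →
      hG * ∑ i ∈ S, δ i ≤ ∑ i ∈ S, ∑ j ∈ Sᶜ, A i j := by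
    intro S hSne' hSpos
    have hSsub : S ⊆ Finset.univ.filter (fun i => 0 < f i) :=
      fun i hi => Finset.mem_filter.mpr ⟨Finset.mem_univ i, hSpos i hi⟩
    have hvolS : ∑ i ∈ S, δ i ≤ (∑ i, δ i) / 2 := by
      refine le_trans ?_ hvolP
      exact Finset.sum_le_sum_of_subset_of_nonneg hSsub (fun i _ _ => (hδpos i).le)
    have hvoltot : 0 < ∑ i, δ i := hvolpos Finset.univ Finset.univ_nonempty
    have hScne : Sᶜ.Nonempty := by
      by_contra hcon
      rw [Finset.not_nonempty_iff_eq_empty] at hcon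
      have hSuniv : S = Finset.univ := by
        rwa [Finset.compl_eq_empty_iff] at hcon
      rw [hSuniv] at hvolS
      linarith
    have hcompl : ∑ i ∈ Sᶜ, δ i = (∑ i, δ i) - ∑ i ∈ S, δ i := by
      have := Finset.sum_add_sum_compl S δ
      linarith
    have hminS : min (∑ i ∈ S, δ i) (∑ i ∈ Sᶜ, δ i) = ∑ i ∈ S, δ i := by
      apply min_eq_left
      rw [hcompl]
      linarith
    have := hGle S hSne' hScne
    rwa [hminS] at this
  have hhard := cheeger_hard A δ hAsymm hAnn hrow hδpos hG lam hGpos f hfpos hcutf heigff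
  exact ⟨by linarith, by linarith⟩
end
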